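/- arXiv:1409.7606 — 2 statements merged into one kernel-verified Lean document; each statement's English description precedes it below -/
import Mathlib

section
/- Under the Kähler cvc(1) package described in the context, assume dim V ≥ 4. Then the positive self-adjoint operator -A∘A has at most two distinct eigenvalues. -/
open scoped RealInnerProductSpace
set_option linter.unusedSectionVars false
set_option maxHeartbeats 1600000

section
variable {V : Type*} [NormedAddCommGroup V] [InnerProductSpace ℝ V] [FiniteDimensional ℝ V]

lemma s16_mem_orth_iff (v w z : V) :
    z ∈ (Submodule.span ℝ {v, w})ᗮ ↔ (⟪v, z⟫ = 0 ∧ ⟪w, z⟫ = 0) := by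
  rw [Submodule.mem_orthogonal]
  constructor
  · intro h
    exact ⟨h v (Submodule.subset_span (by simp)), h w (Submodule.subset_span (by simp))⟩
  · rintro ⟨h1, h2⟩ u hu
    induction hu using Submodule.span_induction with
    | mem x hx => rcases hx with hx | hx <;> subst hx <;> assumption
    | zero => simp
    | add x y _ _ hx hy => rw [inner_add_left, hx, hy]; ring
    | smul a x _ hx => rw [real_inner_smul_left, hx]; ring

noncomputable def s16kappa (R : V →ₗ[ℝ] V →ₗ[ℝ] V →ₗ[ℝ] V →ₗ[ℝ] ℝ) (A : V →ₗ[ℝ] V) (v : V) : ℝ :=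
  (R (A v) v v (A v) / ⟪A v, A v⟫ - 1) / ⟪A v, A v⟫

variable (R : V →ₗ[ℝ] V →ₗ[ℝ] V →ₗ[ℝ] V →ₗ[ℝ] ℝ) (A : V →ₗ[ℝ] V)

lemma s16_last_antisym (hskew : ∀ X Y Z W : V, R X Y Z W = - R Y X Z W)
    (hpair : ∀ X Y Z W : V, R X Y Z W = R Z W X Y) (X Y Z W : V) :
    R X Y Z W = - R X Y W Z := by
  rw [hpair, hskew, hpair]

lemma s16_swap14 (hskew : ∀ X Y Z W : V, R X Y Z W = - R Y X Z W)
    (hpair : ∀ X Y Z W : V, R X Y Z W = R Z W X Y) (v X Y : V) :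
    R X v v Y = R Y v v X := by
  calc R X v v Y = R v Y X v := hpair _ _ _ _
    _ = -R Y v X v := hskew _ _ _ _
    _ = R Y v v X := by rw [s16_last_antisym R hskew hpair Y v X v]; ring

lemma s16_star (hskew : ∀ X Y Z W : V, R X Y Z W = - R Y X Z W)
    (hpair : ∀ X Y Z W : V, R X Y Z W = R Z W X Y)
    (hAinj : Function.Injective A)
    (hAskew : ∀ x y : V, ⟪A x, y⟫ = -⟪x, A y⟫)
    (hE : ∀ v : V, ‖v‖ = 1 → ∀ w : V,
      (⟪w, v⟫ = 0 ∧ ∀ u : V, R w v v u = ⟪w, u⟫) ↔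
        w ∈ (Submodule.span ℝ {v, A v})ᗮ)
    (v : V) (hv : ‖v‖ = 1) (z u : V) :
    R z v v u = ⟪z, u⟫ - ⟪z, v⟫ * ⟪v, u⟫ + s16kappa R A v * (⟪z, A v⟫ * ⟪A v, u⟫) := by
  have hvne : v ≠ 0 := by intro h; rw [h] at hv; simp at hv
  have hAvne : A v ≠ 0 := fun h => hvne (hAinj (by simpa using h))
  have hm : (0:ℝ) < ⟪A v, A v⟫ := by
    rw [real_inner_self_eq_norm_sq]
    exact pow_pos (norm_pos_iff.mpr hAvne) 2
  set m : ℝ := ⟪A v, A v⟫ with hmdef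
  have hvv : ⟪v, v⟫ = (1:ℝ) := by
    rw [real_inner_self_eq_norm_sq, hv]; norm_num
  have hAvv : ⟪A v, v⟫ = 0 := by
    have h := hAskew v v; rw [real_inner_comm v (A v)] at h
    rw [real_inner_comm]; linarith
  have hvAv : ⟪v, A v⟫ = 0 := by rw [real_inner_comm]; exact hAvv
  -- membership in E_v
  have hEv : ∀ z' : V, ⟪z', v⟫ = 0 → ⟪z', A v⟫ = 0 → ∀ u' : V, R z' v v u' = ⟪z', u'⟫ := by
    intro z' h1 h2
    exact (((hE v hv z').mpr) ((s16_mem_orth_iff v (A v) z').mpr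
      ⟨by rw [real_inner_comm]; exact h1, by rw [real_inner_comm]; exact h2⟩)).2
  set lam : ℝ := R (A v) v v (A v) / m with hlamdef
  -- R (A v) v v u = lam * ⟪A v, u⟫
  have hRAv : ∀ u' : V, R (A v) v v u' = lam * ⟪A v, u'⟫ := by
    intro u'
    set uE : V := u' - ⟪u', v⟫ • v - (⟪u', A v⟫ / m) • A v with huEdef
    have huE1 : ⟪uE, v⟫ = 0 := by
      simp only [huEdef, inner_sub_left, real_inner_smul_left, hvv, hAvv]
      ring
    have huE2 : ⟪uE, A v⟫ = 0 := by
      simp only [huEdef, inner_sub_left, real_inner_smul_left, hvAv, ← hmdef]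
      field_simp
      ring
    have hu' : u' = ⟪u', v⟫ • v + (⟪u', A v⟫ / m) • A v + uE := by
      rw [huEdef]; abel
    have e0 : R (A v) v v v = 0 := by
      have h := s16_last_antisym R hskew hpair (A v) v v v; linarith
    have eE : R (A v) v v uE = 0 := by
      rw [s16_swap14 R hskew hpair, hEv uE huE1 huE2]; exact huE2
    calc R (A v) v v u' = R (A v) v v (⟪u', v⟫ • v + (⟪u', A v⟫ / m) • A v + uE) := by rw [← hu']
      _ = ⟪u', v⟫ * R (A v) v v v + (⟪u', A v⟫ / m) * R (A v) v v (A v)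
          + R (A v) v v uE := by
            simp only [map_add, map_smul, LinearMap.add_apply, LinearMap.smul_apply,
              smul_eq_mul]
      _ = (⟪u', A v⟫ / m) * R (A v) v v (A v) := by rw [e0, eE]; ring
      _ = lam * ⟪A v, u'⟫ := by
          rw [hlamdef, real_inner_comm (A v) u']; field_simp
  -- main star formula
  set zE : V := z - ⟪z, v⟫ • v - (⟪z, A v⟫ / m) • A v with hzEdef
  have hz1 : ⟪zE, v⟫ = 0 := by
    simp only [hzEdef, inner_sub_left, real_inner_smul_left, hvv, hAvv]; ring
  have hz2 : ⟪zE, A v⟫ = 0 := by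
    simp only [hzEdef, inner_sub_left, real_inner_smul_left, hvAv, ← hmdef]; field_simp; ring
  have hz : z = ⟪z, v⟫ • v + (⟪z, A v⟫ / m) • A v + zE := by rw [hzEdef]; abel
  have e0 : R v v v u = 0 := by
    have h := hskew v v v u; linarith
  have expand : R z v v u = ⟪z, v⟫ * R v v v u + (⟪z, A v⟫ / m) * R (A v) v v u + R zE v v u := by
    conv_lhs => rw [hz]
    simp only [map_add, map_smul, LinearMap.add_apply, LinearMap.smul_apply,
      smul_eq_mul]
  rw [expand, e0, hRAv u, hEv zE hz1 hz2 u]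
  have hzEu : ⟪zE, u⟫ = ⟪z, u⟫ - ⟪z, v⟫ * ⟪v, u⟫ - (⟪z, A v⟫ / m) * ⟪A v, u⟫ := by
    simp only [hzEdef, inner_sub_left, real_inner_smul_left]
  rw [hzEu, s16kappa, hlamdef, ← hmdef]
  field_simp
  ring


lemma s16_kappa_neg (v : V) : s16kappa R A (-v) = s16kappa R A v := by
  simp [s16kappa]
  rw [← neg_one_smul ℝ (A v)]; simp only [map_smul, LinearMap.smul_apply, smul_eq_mul]; ring

lemma s16_kappa_one_smul (v : V) : s16kappa R A ((1:ℝ) • v) = s16kappa R A v := by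
  simp

lemma s16_unit_combo (v w : V) (hv : ‖v‖ = 1) (hw : ‖w‖ = 1) (hvw : ⟪v, w⟫ = 0)
    (c s : ℝ) (hcs : c^2 + s^2 = 1) : ‖c • v + s • w‖ = 1 := by
  have hvv : ⟪v, v⟫ = (1:ℝ) := by rw [real_inner_self_eq_norm_sq, hv]; norm_num
  have hww : ⟪w, w⟫ = (1:ℝ) := by rw [real_inner_self_eq_norm_sq, hw]; norm_num
  have hwv : ⟪w, v⟫ = (0:ℝ) := by rw [real_inner_comm]; exact hvw
  have h : ⟪c • v + s • w, c • v + s • w⟫ = 1 := by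
    simp only [inner_add_left, inner_add_right, real_inner_smul_left, real_inner_smul_right,
      hvv, hww, hvw, hwv]
    ring_nf
    linarith
  have h2 : ‖c • v + s • w‖ ^ 2 = 1 := by rw [← real_inner_self_eq_norm_sq, h]
  nlinarith [norm_nonneg (c • v + s • w)]

lemma s16_diamond (hskew : ∀ X Y Z W : V, R X Y Z W = - R Y X Z W)
    (hpair : ∀ X Y Z W : V, R X Y Z W = R Z W X Y)
    (hAinj : Function.Injective A)
    (hAskew : ∀ x y : V, ⟪A x, y⟫ = -⟪x, A y⟫)
    (hE : ∀ v : V, ‖v‖ = 1 → ∀ w : V,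
      (⟪w, v⟫ = 0 ∧ ∀ u : V, R w v v u = ⟪w, u⟫) ↔
        w ∈ (Submodule.span ℝ {v, A v})ᗮ)
    (v w : V) (hv : ‖v‖ = 1) (hw : ‖w‖ = 1) (hvw : ⟪v, w⟫ = 0)
    (c s : ℝ) (hcs : c^2 + s^2 = 1) (z u : V) :
    s16kappa R A (c • v + s • w) * ((c*⟪z, A v⟫ + s*⟪z, A w⟫) * (c*⟪A v, u⟫ + s*⟪A w, u⟫))
      - c^2 * (s16kappa R A v * (⟪z, A v⟫ * ⟪A v, u⟫))
      - s^2 * (s16kappa R A w * (⟪z, A w⟫ * ⟪A w, u⟫))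
    = c*s*(R z v w u + R z w v u + ⟪z, v⟫*⟪w, u⟫ + ⟪z, w⟫*⟪v, u⟫) := by
  set x := c • v + s • w with hxdef
  have hx : ‖x‖ = 1 := s16_unit_combo v w hv hw hvw c s hcs
  have h1 := s16_star R A hskew hpair hAinj hAskew hE x hx z u
  have h2 := s16_star R A hskew hpair hAinj hAskew hE v hv z u
  have h3 := s16_star R A hskew hpair hAinj hAskew hE w hw z u
  have hexp : R z x x u = c^2 * R z v v u + c*s*(R z v w u) + c*s*(R z w v u)
      + s^2 * R z w w u := by
    simp only [hxdef, map_add, map_smul, LinearMap.add_apply, LinearMap.smul_apply,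
      smul_eq_mul]
    ring
  have hzx : ⟪z, x⟫ = c*⟪z, v⟫ + s*⟪z, w⟫ := by
    simp only [hxdef, inner_add_right, real_inner_smul_right]
  have hxu : ⟪x, u⟫ = c*⟪v, u⟫ + s*⟪w, u⟫ := by
    simp only [hxdef, inner_add_left, real_inner_smul_left]
  have hzAx : ⟪z, A x⟫ = c*⟪z, A v⟫ + s*⟪z, A w⟫ := by
    simp only [hxdef, map_add, map_smul, inner_add_right, real_inner_smul_right]
  have hAxu : ⟪A x, u⟫ = c*⟪A v, u⟫ + s*⟪A w, u⟫ := by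
    simp only [hxdef, map_add, map_smul, inner_add_left, real_inner_smul_left]
  rw [hexp, hzx, hxu, hzAx, hAxu] at h1
  linear_combination c^2*h2 + s^2*h3 + ⟪z, u⟫*hcs - h1

lemma s16_kappa_pair (hskew : ∀ X Y Z W : V, R X Y Z W = - R Y X Z W)
    (hpair : ∀ X Y Z W : V, R X Y Z W = R Z W X Y)
    (hAinj : Function.Injective A)
    (hAskew : ∀ x y : V, ⟪A x, y⟫ = -⟪x, A y⟫)
    (hE : ∀ v : V, ‖v‖ = 1 → ∀ w : V,
      (⟪w, v⟫ = 0 ∧ ∀ u : V, R w v v u = ⟪w, u⟫) ↔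
        w ∈ (Submodule.span ℝ {v, A v})ᗮ)
    (v w : V) (hv : ‖v‖ = 1) (hw : ‖w‖ = 1) (hvw : ⟪v, w⟫ = 0)
    (hAvw : ⟪A v, A w⟫ = 0) :
    s16kappa R A v = s16kappa R A w ∧
      ∀ c s : ℝ, c^2 + s^2 = 1 → s16kappa R A (c • v + s • w) = s16kappa R A v := by
  have hvne : v ≠ 0 := by intro h; rw [h] at hv; simp at hv
  have hwne : w ≠ 0 := by intro h; rw [h] at hw; simp at hw
  have hAvne : A v ≠ 0 := fun h => hvne (hAinj (by simpa using h))
  have hAwne : A w ≠ 0 := fun h => hwne (hAinj (by simpa using h))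
  have hmu : (0:ℝ) < ⟪A v, A v⟫ := by
    rw [real_inner_self_eq_norm_sq]; exact pow_pos (norm_pos_iff.mpr hAvne) 2
  have hnu : (0:ℝ) < ⟪A w, A w⟫ := by
    rw [real_inner_self_eq_norm_sq]; exact pow_pos (norm_pos_iff.mpr hAwne) 2
  have hAwv : ⟪A w, A v⟫ = 0 := by rw [real_inner_comm]; exact hAvw
  set μ : ℝ := ⟪A v, A v⟫ with hmudef
  set ν : ℝ := ⟪A w, A w⟫ with hnudef
  have hD := s16_diamond R A hskew hpair hAinj hAskew hE v w hv hw hvw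
  have hcs1 : (3/5:ℝ)^2 + (4/5:ℝ)^2 = 1 := by norm_num
  have hcs2 : (3/5:ℝ)^2 + (-(4/5):ℝ)^2 = 1 := by norm_num
  set k1 : ℝ := s16kappa R A ((3/5:ℝ) • v + (4/5:ℝ) • w) with hk1def
  set k2 : ℝ := s16kappa R A ((3/5:ℝ) • v + (-(4/5):ℝ) • w) with hk2def
  set kv : ℝ := s16kappa R A v with hkvdef
  set kw : ℝ := s16kappa R A w with hkwdef
  set Haa : ℝ := R (A v) v w (A v) + R (A v) w v (A v) + ⟪A v, v⟫*⟪w, A v⟫ + ⟪A v, w⟫*⟪v, A v⟫ with hHaa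
  set Hab : ℝ := R (A v) v w (A w) + R (A v) w v (A w) + ⟪A v, v⟫*⟪w, A w⟫ + ⟪A v, w⟫*⟪v, A w⟫ with hHab
  set Hbb : ℝ := R (A w) v w (A w) + R (A w) w v (A w) + ⟪A w, v⟫*⟪w, A w⟫ + ⟪A w, w⟫*⟪v, A w⟫ with hHbb
  have d1 := hD (3/5) (4/5) hcs1 (A v) (A v)
  have d2 := hD (3/5) (-(4/5)) hcs2 (A v) (A v)
  have d3 := hD (3/5) (4/5) hcs1 (A v) (A w)
  have d4 := hD (3/5) (-(4/5)) hcs2 (A v) (A w)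
  have d5 := hD (3/5) (4/5) hcs1 (A w) (A w)
  have d6 := hD (3/5) (-(4/5)) hcs2 (A w) (A w)
  simp only [hAvw, hAwv, ← hmudef, ← hnudef, ← hk1def, ← hk2def, ← hkvdef, ← hkwdef, ← hHaa, ← hHab, ← hHbb] at d1 d2 d3 d4 d5 d6
  have hmune : μ ≠ 0 := ne_of_gt hmu
  have hnune : ν ≠ 0 := ne_of_gt hnu
  have e3 : k1 * (μ*ν) = Hab := by linear_combination (25/12) * d3
  have e4 : k2 * (μ*ν) = Hab := by linear_combination (-25/12) * d4
  have hk12 : k1 = k2 := by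
    have h0 : (k1 - k2) * (μ*ν) = 0 := by linear_combination e3 - e4
    rcases mul_eq_zero.mp h0 with h | h
    · linarith
    · exact absurd h (by simp [hmune, hnune])
  have hk1v : k1 = kv := by
    have h0 : (k1 + k2 - 2*kv) * (μ*μ) = 0 := by linear_combination (25/9)*(d1 + d2)
    rw [← hk12] at h0
    have h0' : (k1 - kv) * (μ*μ) = 0 := by linear_combination (1/2) * h0
    rcases mul_eq_zero.mp h0' with h | h
    · linarith
    · exact absurd h (by simp [hmune])
  have hk1w : k1 = kw := by
    have h0 : (k1 + k2 - 2*kw) * (ν*ν) = 0 := by linear_combination (25/16)*(d5 + d6)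
    rw [← hk12] at h0
    have h0' : (k1 - kw) * (ν*ν) = 0 := by linear_combination (1/2) * h0
    rcases mul_eq_zero.mp h0' with h | h
    · linarith
    · exact absurd h (by simp [hnune])
  constructor
  · rw [← hk1v, hk1w]
  · intro c s hcs
    by_cases hc : c = 0
    · subst hc
      have hs : s = 1 ∨ s = -1 := by
        have h1 : (s-1)*(s+1) = 0 := by nlinarith
        rcases mul_eq_zero.mp h1 with h | h
        · left; linarith
        · right; linarith
      rcases hs with h | h <;> subst h
      · simp only [zero_smul, one_smul, zero_add]
        rw [← hkwdef, ← hk1w, hk1v]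
      · simp only [zero_smul, neg_one_smul, zero_add]
        rw [s16_kappa_neg, ← hkwdef, ← hk1w, hk1v]
    · by_cases hs : s = 0
      · subst hs
        have hc1 : c = 1 ∨ c = -1 := by
          have h1 : (c-1)*(c+1) = 0 := by nlinarith
          rcases mul_eq_zero.mp h1 with h | h
          · left; linarith
          · right; linarith
        rcases hc1 with h | h <;> subst h
        · simp only [one_smul, zero_smul, add_zero]
          rfl
        · simp only [neg_one_smul, zero_smul, add_zero]
          rw [s16_kappa_neg]
      · have d7 := hD c s hcs (A v) (A w)
        simp only [hAvw, hAwv, ← hmudef, ← hnudef, ← hkvdef, ← hkwdef, ← hHab] at d7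
        set kx : ℝ := s16kappa R A (c • v + s • w) with hkxdef
        have h0 : (kx - k1) * (c*s*(μ*ν)) = 0 := by linear_combination d7 - c*s*e3
        rcases mul_eq_zero.mp h0 with h | h
        · have hxx : kx = k1 := by linarith
          rw [hxx, hk1v]
        · exact absurd h (by simp [hc, hs, hmune, hnune])


lemma s16_Jskew (J : V →ₗ[ℝ] V) (hJiso : ∀ x y : V, ⟪J x, J y⟫ = ⟪x, y⟫)
    (hJ2 : ∀ x : V, J (J x) = -x) (x y : V) : ⟪J x, y⟫ = -⟪x, J y⟫ := by
  have h := hJiso x (J y)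
  rw [hJ2] at h
  rw [← h]
  simp [real_inner_comm]

lemma s16_J_unit (J : V →ₗ[ℝ] V) (hJiso : ∀ x y : V, ⟪J x, J y⟫ = ⟪x, y⟫)
    (v : V) (hv : ‖v‖ = 1) : ‖J v‖ = 1 := by
  have h := hJiso v v
  rw [real_inner_self_eq_norm_sq, real_inner_self_eq_norm_sq, hv] at h
  nlinarith [norm_nonneg (J v)]

lemma s16_kappa_pos (hskew : ∀ X Y Z W : V, R X Y Z W = - R Y X Z W)
    (hpair : ∀ X Y Z W : V, R X Y Z W = R Z W X Y)
    (hAinj : Function.Injective A)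
    (hAskew : ∀ x y : V, ⟪A x, y⟫ = -⟪x, A y⟫)
    (hsec : ∀ x y : V, ‖x‖ = 1 → ‖y‖ = 1 → ⟪x, y⟫ = 0 → 1 ≤ R y x x y)
    (hE : ∀ v : V, ‖v‖ = 1 → ∀ w : V,
      (⟪w, v⟫ = 0 ∧ ∀ u : V, R w v v u = ⟪w, u⟫) ↔
        w ∈ (Submodule.span ℝ {v, A v})ᗮ)
    (v : V) (hv : ‖v‖ = 1) : 0 < s16kappa R A v := by
  have hvne : v ≠ 0 := by intro h; rw [h] at hv; simp at hv
  have hAvne : A v ≠ 0 := fun h => hvne (hAinj (by simpa using h))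
  have hm : (0:ℝ) < ⟪A v, A v⟫ := by
    rw [real_inner_self_eq_norm_sq]; exact pow_pos (norm_pos_iff.mpr hAvne) 2
  have hAvv : ⟪A v, v⟫ = 0 := by
    have h := hAskew v v; rw [real_inner_comm v (A v)] at h
    rw [real_inner_comm]; linarith
  -- lambda >= 1 via hsec
  have hy : ‖(‖A v‖⁻¹ • A v)‖ = 1 := norm_smul_inv_norm hAvne
  have hvy : ⟪v, ‖A v‖⁻¹ • A v⟫ = 0 := by
    rw [real_inner_smul_right, real_inner_comm, hAvv]; ring
  have hsec1 := hsec v (‖A v‖⁻¹ • A v) hv hy hvy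
  have hexp : R (‖A v‖⁻¹ • A v) v v (‖A v‖⁻¹ • A v)
      = ‖A v‖⁻¹ * (‖A v‖⁻¹ * R (A v) v v (A v)) := by
    simp only [map_smul, LinearMap.smul_apply, smul_eq_mul]
  rw [hexp] at hsec1
  have hnormsq : ⟪A v, A v⟫ = ‖A v‖^2 := real_inner_self_eq_norm_sq (A v)
  have hnpos : (0:ℝ) < ‖A v‖ := norm_pos_iff.mpr hAvne
  have hlam : ⟪A v, A v⟫ ≤ R (A v) v v (A v) := by
    have h2 : ‖A v‖^2 ≤ R (A v) v v (A v) := by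
      have := mul_le_mul_of_nonneg_left hsec1 (le_of_lt (mul_pos hnpos hnpos))
      calc ‖A v‖^2 = ‖A v‖ * ‖A v‖ * 1 := by ring
        _ ≤ ‖A v‖ * ‖A v‖ * (‖A v‖⁻¹ * (‖A v‖⁻¹ * R (A v) v v (A v))) := by
            apply mul_le_mul_of_nonneg_left hsec1 (by positivity)
        _ = R (A v) v v (A v) := by field_simp
    linarith [hnormsq]
  -- kappa >= 0
  have hknn : 0 ≤ s16kappa R A v := by
    rw [s16kappa]
    apply div_nonneg _ (le_of_lt hm)
    rw [sub_nonneg, le_div_iff₀ hm]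
    linarith
  rcases lt_or_eq_of_le hknn with h | h
  · exact h
  -- kappa = 0 leads to contradiction
  exfalso
  have hstar := s16_star R A hskew hpair hAinj hAskew hE v hv
  have hRAv : ∀ u : V, R (A v) v v u = ⟪A v, u⟫ := by
    intro u
    rw [hstar (A v) u, ← h, hAvv]
    ring
  have hmem := (hE v hv (A v)).mp ⟨hAvv, hRAv⟩
  have h0 := ((s16_mem_orth_iff v (A v) (A v)).mp hmem).2
  rw [h0] at hm
  exact lt_irrefl 0 hm

lemma s16_parallel (J : V →ₗ[ℝ] V) (hJiso : ∀ x y : V, ⟪J x, J y⟫ = ⟪x, y⟫)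
    (hJ2 : ∀ x : V, J (J x) = -x)
    (hskew : ∀ X Y Z W : V, R X Y Z W = - R Y X Z W)
    (hpair : ∀ X Y Z W : V, R X Y Z W = R Z W X Y)
    (hkahler : ∀ X Y Z W : V, R (J X) (J Y) Z W = R X Y Z W)
    (hAinj : Function.Injective A)
    (hAskew : ∀ x y : V, ⟪A x, y⟫ = -⟪x, A y⟫)
    (hsec : ∀ x y : V, ‖x‖ = 1 → ‖y‖ = 1 → ⟪x, y⟫ = 0 → 1 ≤ R y x x y)
    (hE : ∀ v : V, ‖v‖ = 1 → ∀ w : V,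
      (⟪w, v⟫ = 0 ∧ ∀ u : V, R w v v u = ⟪w, u⟫) ↔
        w ∈ (Submodule.span ℝ {v, A v})ᗮ)
    (v : V) (hv : ‖v‖ = 1) : ∃ t : ℝ, A (J v) = t • J (A v) := by
  have hJv : ‖J v‖ = 1 := s16_J_unit J hJiso v hv
  have hkahler' : ∀ X Y Z W : V, R X Y (J Z) (J W) = R X Y Z W := by
    intro X Y Z W
    rw [hpair, hkahler, hpair]
  -- key identity
  have hkey : ∀ z u : V, R z (J v) (J v) u = R (J z) v v (J u) := by
    intro z u
    have h1 := hkahler (J z) v (J v) u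
    rw [hJ2 z] at h1
    have h2 : R (J z) v (J v) u = -(R (J z) v v (J u)) := by
      have h3 := hkahler' (J z) v v (-(J u))
      simp only [map_neg] at h3
      rw [hJ2 u] at h3
      simp only [map_neg, LinearMap.neg_apply] at h3 ⊢
      linarith [h3]
    have h4 : R (-z) (J v) (J v) u = -(R z (J v) (J v) u) := by
      rw [← neg_one_smul ℝ z]; simp only [map_smul, LinearMap.smul_apply, smul_eq_mul]; ring
    rw [h4] at h1
    linarith [h1, h2]
  have hstarv := s16_star R A hskew hpair hAinj hAskew hE v hv
  have hstarJv := s16_star R A hskew hpair hAinj hAskew hE (J v) hJv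
  have hK1 : ∀ z u : V,
      s16kappa R A (J v) * (⟪z, A (J v)⟫ * ⟪A (J v), u⟫)
        = s16kappa R A v * (⟪z, J (A v)⟫ * ⟪J (A v), u⟫) := by
    intro z u
    have hs1 := hstarJv z u
    have hs2 := hstarv (J z) (J u)
    have i1 : ⟪J z, J u⟫ = ⟪z, u⟫ := hJiso z u
    have i2 : ⟪J z, v⟫ = -⟪z, J v⟫ := s16_Jskew J hJiso hJ2 z v
    have i3 : ⟪v, J u⟫ = -⟪J v, u⟫ := by
      have := s16_Jskew J hJiso hJ2 v u; linarith
    have i4 : ⟪J z, A v⟫ = -⟪z, J (A v)⟫ := s16_Jskew J hJiso hJ2 z (A v)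
    have i5 : ⟪A v, J u⟫ = -⟪J (A v), u⟫ := by
      have := s16_Jskew J hJiso hJ2 (A v) u; linarith
    rw [i1, i2, i3, i4, i5] at hs2
    have hk := hkey z u
    linear_combination hs2 - hs1 + hk
  -- derive proportionality
  have hvne : v ≠ 0 := by intro h; rw [h] at hv; simp at hv
  have hAvne : A v ≠ 0 := fun h => hvne (hAinj (by simpa using h))
  have hJinj : Function.Injective J := by
    intro x y hxy
    have : J (J x) = J (J y) := by rw [hxy]
    rw [hJ2, hJ2] at this
    exact neg_injective this
  have hJAvne : J (A v) ≠ 0 := fun h => hAvne (hJinj (by rw [h, map_zero]))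
  have hkJv : 0 < s16kappa R A (J v) :=
    s16_kappa_pos R A hskew hpair hAinj hAskew hsec hE (J v) hJv
  have hkv : 0 < s16kappa R A v :=
    s16_kappa_pos R A hskew hpair hAinj hAskew hsec hE v hv
  set P : V := A (J v) with hPdef
  set Q : V := J (A v) with hQdef
  have hQQ : (0:ℝ) < ⟪Q, Q⟫ := by
    rw [real_inner_self_eq_norm_sq]; exact pow_pos (norm_pos_iff.mpr hJAvne) 2
  have h5 := hK1 Q Q
  have hPQne : ⟪P, Q⟫ ≠ 0 := by
    intro h0
    have hc : ⟪Q, P⟫ = ⟪P, Q⟫ := real_inner_comm P Q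
    have h7 : s16kappa R A v * (⟪Q, Q⟫ * ⟪Q, Q⟫) = 0 := by
      rw [← h5, hc, h0]; ring
    have h8 := mul_pos hkv (mul_pos hQQ hQQ)
    linarith
  set c : ℝ := s16kappa R A (J v) * ⟪P, Q⟫ with hcdef
  set d : ℝ := s16kappa R A v * ⟪Q, Q⟫ with hddef
  have hcne : c ≠ 0 := mul_ne_zero (ne_of_gt hkJv) hPQne
  have hy : c • P - d • Q = 0 := by
    have hz : ∀ z : V, ⟪z, c • P - d • Q⟫ = 0 := by
      intro z
      have h6 := hK1 z Q
      simp only [inner_sub_right, real_inner_smul_right, hcdef, hddef]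
      linear_combination h6
    have := hz (c • P - d • Q)
    exact inner_self_eq_zero.mp this
  refine ⟨c⁻¹ * d, ?_⟩
  have hPd : c • P = d • Q := by
    rw [sub_eq_zero] at hy; exact hy
  calc P = (c⁻¹ * c) • P := by rw [inv_mul_cancel₀ hcne, one_smul]
    _ = c⁻¹ • (c • P) := by rw [smul_smul]
    _ = c⁻¹ • (d • Q) := by rw [hPd]
    _ = (c⁻¹ * d) • Q := by rw [smul_smul]


lemma s16_AJcomm (J : V →ₗ[ℝ] V) (hJiso : ∀ x y : V, ⟪J x, J y⟫ = ⟪x, y⟫)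
    (hJ2 : ∀ x : V, J (J x) = -x)
    (hskew : ∀ X Y Z W : V, R X Y Z W = - R Y X Z W)
    (hpair : ∀ X Y Z W : V, R X Y Z W = R Z W X Y)
    (hkahler : ∀ X Y Z W : V, R (J X) (J Y) Z W = R X Y Z W)
    (hAinj : Function.Injective A)
    (hAskew : ∀ x y : V, ⟪A x, y⟫ = -⟪x, A y⟫)
    (hsec : ∀ x y : V, ‖x‖ = 1 → ‖y‖ = 1 → ⟪x, y⟫ = 0 → 1 ≤ R y x x y)
    (hE : ∀ v : V, ‖v‖ = 1 → ∀ w : V,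
      (⟪w, v⟫ = 0 ∧ ∀ u : V, R w v v u = ⟪w, u⟫) ↔
        w ∈ (Submodule.span ℝ {v, A v})ᗮ)
    (v₀ : V) (hv₀ : v₀ ≠ 0) :
    ∃ τ : ℝ, (∀ v : V, A (J v) = τ • J (A v)) ∧ τ * τ = 1 := by
  have hJinj : Function.Injective J := by
    intro x y hxy
    have h : J (J x) = J (J y) := by rw [hxy]
    rw [hJ2, hJ2] at h
    exact neg_injective h
  have hpar : ∀ v : V, v ≠ 0 → ∃ t : ℝ, A (J v) = t • J (A v) := by
    intro v hvne
    obtain ⟨t, ht⟩ := s16_parallel R A J hJiso hJ2 hskew hpair hkahler hAinj hAskew hsec hE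
      (‖v‖⁻¹ • v) (norm_smul_inv_norm hvne)
    refine ⟨t, ?_⟩
    have hnne : ‖v‖ ≠ 0 := norm_ne_zero_iff.mpr hvne
    simp only [map_smul] at ht
    have h2 := congrArg (fun x : V => ‖v‖ • x) ht
    simp only [smul_smul] at h2
    rw [mul_inv_cancel₀ hnne, one_smul] at h2
    rw [h2]
    congr 1
    field_simp
  obtain ⟨τ, hτ0⟩ := hpar v₀ hv₀
  have hAv₀ne : A v₀ ≠ 0 := fun h => hv₀ (hAinj (by simpa using h))
  have hJAinj : ∀ x : V, J (A x) = 0 → x = 0 := by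
    intro x hx
    have : A x = 0 := hJinj (by rw [hx, map_zero])
    exact hAinj (by simpa using this)
  have hfull : ∀ v : V, A (J v) = τ • J (A v) := by
    intro v
    by_cases hvz : v = 0
    · simp [hvz]
    obtain ⟨t, ht⟩ := hpar v hvz
    by_cases hsp : ∃ a : ℝ, v = a • v₀
    · obtain ⟨a, rfl⟩ := hsp
      simp only [map_smul]
      rw [hτ0, smul_comm]
    · push_neg at hsp
      have hvv0 : v + v₀ ≠ 0 := by
        intro h
        exact hsp (-1) (by
          have : v = -v₀ := by
            have := congrArg (fun x : V => x - v₀) h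
            simpa [sub_eq_add_neg] using this
          rw [this, neg_one_smul])
      obtain ⟨t1, ht1⟩ := hpar (v + v₀) hvv0
      simp only [map_add] at ht1
      rw [ht, hτ0] at ht1
      -- ht1 : t • J (A v) + τ • J (A v₀) = t1 • (J (A v) + J (A v₀))
      have hcomb : (t - t1) • J (A v) + (τ - t1) • J (A v₀) = 0 := by
        have e : (t - t1) • J (A v) + (τ - t1) • J (A v₀)
            = (t • J (A v) + τ • J (A v₀)) - (t1 • J (A v) + t1 • J (A v₀)) := by
          rw [sub_smul, sub_smul]; abel
        rw [e, ht1, smul_add, sub_self]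
      -- independence
      have hab : ∀ a b : ℝ, a • J (A v) + b • J (A v₀) = 0 → a = 0 ∧ b = 0 := by
        intro a b h
        have h' : J (A (a • v + b • v₀)) = 0 := by
          simp only [map_add, map_smul]
          exact h
        have h2 : a • v + b • v₀ = 0 := by
          have := hJAinj _ h'
          exact this
        have ha : a = 0 := by
          by_contra hane
          have h3 : a • v = -(b • v₀) := eq_neg_of_add_eq_zero_left h2
          have h4 : v = a⁻¹ • (a • v) := by
            rw [smul_smul, inv_mul_cancel₀ hane, one_smul]
          refine hsp (-(b/a)) ?_
          rw [h4, h3, smul_neg, smul_smul, ← neg_smul]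
          congr 1
          field_simp
        refine ⟨ha, ?_⟩
        rw [ha, zero_smul, zero_add] at h2
        rcases smul_eq_zero.mp h2 with h | h
        · exact h
        · exact absurd h hv₀
      obtain ⟨h1, h2⟩ := hab _ _ hcomb
      have : t = τ := by
        have : t = t1 := by linarith
        have h3 : τ = t1 := by linarith
        rw [this, h3]
      rw [ht, this]
  refine ⟨τ, hfull, ?_⟩
  have h := hfull (J v₀)
  rw [hJ2] at h
  simp only [map_neg] at h
  rw [hfull v₀] at h
  simp only [map_smul, smul_smul] at h
  rw [hJ2] at h
  -- h : -(A v₀) = (τ * τ) • (-(A v₀))  roughly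
  have h2 : ((τ * τ) - 1) • A v₀ = 0 := by
    rw [sub_smul, one_smul]
    rw [smul_neg] at h
    have := neg_injective h
    rw [← this]
    abel
  rcases smul_eq_zero.mp h2 with h | h
  · linarith [h]
  · exact absurd h hAv₀ne


lemma s16_star_scaled (hskew : ∀ X Y Z W : V, R X Y Z W = - R Y X Z W)
    (hpair : ∀ X Y Z W : V, R X Y Z W = R Z W X Y)
    (hAinj : Function.Injective A)
    (hAskew : ∀ x y : V, ⟪A x, y⟫ = -⟪x, A y⟫)
    (hE : ∀ v : V, ‖v‖ = 1 → ∀ w : V,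
      (⟪w, v⟫ = 0 ∧ ∀ u : V, R w v v u = ⟪w, u⟫) ↔
        w ∈ (Submodule.span ℝ {v, A v})ᗮ)
    (y : V) (hy : y ≠ 0) (z u : V) :
    R z y y u = ⟪y, y⟫ * ⟪z, u⟫ - ⟪z, y⟫ * ⟪y, u⟫
      + s16kappa R A (‖y‖⁻¹ • y) * (⟪z, A y⟫ * ⟪A y, u⟫) := by
  have hn : ‖y‖ ≠ 0 := norm_ne_zero_iff.mpr hy
  have hyh : ‖(‖y‖⁻¹ • y)‖ = 1 := norm_smul_inv_norm hy
  have h := s16_star R A hskew hpair hAinj hAskew hE (‖y‖⁻¹ • y) hyh z u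
  have hexp : R z (‖y‖⁻¹ • y) (‖y‖⁻¹ • y) u = ‖y‖⁻¹ * (‖y‖⁻¹ * R z y y u) := by
    simp only [map_smul, LinearMap.smul_apply, smul_eq_mul]
  have i1 : ⟪z, ‖y‖⁻¹ • y⟫ = ‖y‖⁻¹ * ⟪z, y⟫ := real_inner_smul_right z y _
  have i2 : ⟪(‖y‖⁻¹ • y), u⟫ = ‖y‖⁻¹ * ⟪y, u⟫ := real_inner_smul_left y u _
  have i3 : ⟪z, A (‖y‖⁻¹ • y)⟫ = ‖y‖⁻¹ * ⟪z, A y⟫ := by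
    rw [map_smul]; exact real_inner_smul_right z (A y) _
  have i4 : ⟪A (‖y‖⁻¹ • y), u⟫ = ‖y‖⁻¹ * ⟪A y, u⟫ := by
    rw [map_smul]; exact real_inner_smul_left (A y) u _
  have i5 : ⟪y, y⟫ = ‖y‖ * ‖y‖ := real_inner_self_eq_norm_mul_norm y
  rw [hexp, i1, i2, i3, i4] at h
  have h2 := congrArg (fun t : ℝ => ‖y‖ * ‖y‖ * t) h
  rw [i5]
  field_simp at h2
  rw [one_div] at h2
  linarith [h2]


lemma s16_cross (J : V →ₗ[ℝ] V) (hJiso : ∀ x y : V, ⟪J x, J y⟫ = ⟪x, y⟫)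
    (hJ2 : ∀ x : V, J (J x) = -x)
    (hskew : ∀ X Y Z W : V, R X Y Z W = - R Y X Z W)
    (hpair : ∀ X Y Z W : V, R X Y Z W = R Z W X Y)
    (hbianchi : ∀ X Y Z W : V, R X Y Z W + R Y Z X W + R Z X Y W = 0)
    (hkahler : ∀ X Y Z W : V, R (J X) (J Y) Z W = R X Y Z W)
    (hAinj : Function.Injective A)
    (hAskew : ∀ x y : V, ⟪A x, y⟫ = -⟪x, A y⟫)
    (hsec : ∀ x y : V, ‖x‖ = 1 → ‖y‖ = 1 → ⟪x, y⟫ = 0 → 1 ≤ R y x x y)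
    (hE : ∀ v : V, ‖v‖ = 1 → ∀ w : V,
      (⟪w, v⟫ = 0 ∧ ∀ u : V, R w v v u = ⟪w, u⟫) ↔
        w ∈ (Submodule.span ℝ {v, A v})ᗮ)
    (τ : ℝ) (hτ : ∀ x : V, A (J x) = τ • J (A x)) (hτ2 : τ * τ = 1)
    (c d : ℝ) (hcd : c ≠ d)
    (v w : V) (hv : ‖v‖ = 1) (hw : ‖w‖ = 1)
    (hvA : A (A v) = -(c • v)) (hwA : A (A w) = -(d • w)) :
    (s16kappa R A v / 3) * (⟪A v, J v⟫ * ⟪A w, J w⟫) = 1 := by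
  have hJskew := s16_Jskew J hJiso hJ2
  -- orthogonality between c- and d-eigenvectors
  have hAxAy : ∀ x y : V, A (A y) = -(d • y) → ⟪A x, A y⟫ = d * ⟪x, y⟫ := by
    intro x y hy
    have h2 := hAskew x (A y)
    rw [hy] at h2
    simp only [inner_neg_right, real_inner_smul_right] at h2
    linarith
  have horth : ∀ x y : V, A (A x) = -(c • x) → A (A y) = -(d • y) → ⟪x, y⟫ = 0 := by
    intro x y hx hy
    have h1 := hAskew (A x) y
    rw [hx] at h1
    simp only [inner_neg_left, real_inner_smul_left] at h1
    have h2 := hAxAy x y hy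
    have h3 : (c - d) * ⟪x, y⟫ = 0 := by linear_combination h2 - h1
    rcases mul_eq_zero.mp h3 with h | h
    · exact absurd (by linarith : c = d) hcd
    · exact h
  -- closure properties
  have hPcsmul : ∀ (t : ℝ) (x : V), A (A x) = -(c • x) → A (A (t • x)) = -(c • (t • x)) := by
    intro t x hx
    rw [map_smul, map_smul, hx, smul_neg, smul_comm]
  have hPdsmul : ∀ (t : ℝ) (x : V), A (A x) = -(d • x) → A (A (t • x)) = -(d • (t • x)) := by
    intro t x hx
    rw [map_smul, map_smul, hx, smul_neg, smul_comm]
  have hPcadd : ∀ x y : V, A (A x) = -(c • x) → A (A y) = -(c • y) →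
      A (A (x + y)) = -(c • (x + y)) := by
    intro x y hx hy
    rw [map_add, map_add, hx, hy, smul_add]
    abel
  have hPdadd : ∀ x y : V, A (A x) = -(d • x) → A (A y) = -(d • y) →
      A (A (x + y)) = -(d • (x + y)) := by
    intro x y hx hy
    rw [map_add, map_add, hx, hy, smul_add]
    abel
  have hPcA : ∀ x : V, A (A x) = -(c • x) → A (A (A x)) = -(c • (A x)) := by
    intro x hx
    rw [hx]
    simp only [map_neg, map_smul]
  have hPdA : ∀ x : V, A (A x) = -(d • x) → A (A (A x)) = -(d • (A x)) := by
    intro x hx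
    rw [hx]
    simp only [map_neg, map_smul]
  have hPcJ : ∀ x : V, A (A x) = -(c • x) → A (A (J x)) = -(c • (J x)) := by
    intro x hx
    rw [hτ (x), map_smul, hτ (A x), smul_smul, hτ2, one_smul, ← map_smul, hx]
    simp only [map_neg, map_smul]
  have hPdJ : ∀ x : V, A (A x) = -(d • x) → A (A (J x)) = -(d • (J x)) := by
    intro x hx
    rw [hτ (x), map_smul, hτ (A x), smul_smul, hτ2, one_smul, ← map_smul, hx]
    simp only [map_neg, map_smul]
  have hPc0 : A (A (0 : V)) = -(c • (0 : V)) := by simp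
  have hPd0 : A (A (0 : V)) = -(d • (0 : V)) := by simp
  -- kappa constants
  have hkvw := s16_kappa_pair R A hskew hpair hAinj hAskew hE v w hv hw
    (horth v w hvA hwA) (by rw [hAxAy v w hwA, horth v w hvA hwA, mul_zero])
  set k : ℝ := s16kappa R A v with hkdef
  have hku : ∀ x : V, ‖x‖ = 1 → A (A x) = -(c • x) → s16kappa R A x = k := by
    intro x hx hxA
    have h := (s16_kappa_pair R A hskew hpair hAinj hAskew hE x w hx hw
      (horth x w hxA hwA) (by rw [hAxAy x w hwA, horth x w hxA hwA, mul_zero])).1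
    rw [h, ← hkvw.1]
  have hkd : ∀ x : V, ‖x‖ = 1 → A (A x) = -(d • x) → s16kappa R A x = k := by
    intro x hx hxA
    have h := (s16_kappa_pair R A hskew hpair hAinj hAskew hE v x hv hx
      (horth v x hvA hxA) (by rw [hAxAy v x hxA, horth v x hvA hxA, mul_zero])).1
    rw [← h]
  -- Q formula for decomposable vectors
  have hQ : ∀ y1 y2 : V, A (A y1) = -(c • y1) → A (A y2) = -(d • y2) → ∀ x z : V,
      R x (y1 + y2) (y1 + y2) z = ⟪y1 + y2, y1 + y2⟫ * ⟪x, z⟫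
        - ⟪x, y1 + y2⟫ * ⟪y1 + y2, z⟫
        + k * (⟪x, A (y1 + y2)⟫ * ⟪A (y1 + y2), z⟫) := by
    intro y1 y2 h1 h2 x z
    by_cases hy0 : y1 + y2 = 0
    · rw [hy0]; simp
    · have hscal := s16_star_scaled R A hskew hpair hAinj hAskew hE (y1 + y2) hy0 x z
      have hkap : s16kappa R A (‖y1 + y2‖⁻¹ • (y1 + y2)) = k := by
        by_cases h10 : y1 = 0
        · rw [h10, zero_add] at hy0 ⊢
          exact hkd _ (norm_smul_inv_norm hy0) (hPdsmul _ _ h2)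
        · by_cases h20 : y2 = 0
          · rw [h20, add_zero] at hy0 ⊢
            exact hku _ (norm_smul_inv_norm hy0) (hPcsmul _ _ h1)
          · have hn1 : ‖y1‖ ≠ 0 := norm_ne_zero_iff.mpr h10
            have hn2 : ‖y2‖ ≠ 0 := norm_ne_zero_iff.mpr h20
            have hn : ‖y1 + y2‖ ≠ 0 := norm_ne_zero_iff.mpr hy0
            have hy12 : ⟪y1, y2⟫ = 0 := horth y1 y2 h1 h2
            have hpyth : ‖y1 + y2‖^2 = ‖y1‖^2 + ‖y2‖^2 := by
              rw [← real_inner_self_eq_norm_sq, ← real_inner_self_eq_norm_sq,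
                ← real_inner_self_eq_norm_sq]
              rw [inner_add_left, inner_add_right, inner_add_right, hy12,
                real_inner_comm y1 y2, hy12]
              ring
            have hab : (‖y1‖/‖y1 + y2‖)^2 + (‖y2‖/‖y1 + y2‖)^2 = 1 := by
              field_simp
              linarith [hpyth]
            have hu1 : ‖(‖y1‖⁻¹ • y1)‖ = 1 := norm_smul_inv_norm h10
            have hu2 : ‖(‖y2‖⁻¹ • y2)‖ = 1 := norm_smul_inv_norm h20
            have ho12 : ⟪‖y1‖⁻¹ • y1, ‖y2‖⁻¹ • y2⟫ = 0 := by
              rw [real_inner_smul_left, real_inner_smul_right, hy12]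
              ring
            have hA12 : ⟪A (‖y1‖⁻¹ • y1), A (‖y2‖⁻¹ • y2)⟫ = 0 := by
              rw [hAxAy _ _ (hPdsmul _ _ h2), ho12, mul_zero]
            have hpair12 := s16_kappa_pair R A hskew hpair hAinj hAskew hE
              (‖y1‖⁻¹ • y1) (‖y2‖⁻¹ • y2) hu1 hu2 ho12 hA12
            have hcomb := hpair12.2 (‖y1‖/‖y1 + y2‖) (‖y2‖/‖y1 + y2‖) hab
            have hvec : (‖y1‖/‖y1 + y2‖) • (‖y1‖⁻¹ • y1) + (‖y2‖/‖y1 + y2‖) • (‖y2‖⁻¹ • y2)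
                = ‖y1 + y2‖⁻¹ • (y1 + y2) := by
              rw [smul_smul, smul_smul, smul_add]
              congr 1
              · congr 1
                field_simp
              · congr 1
                field_simp
            rw [hvec] at hcomb
            rw [hcomb]
            exact hku _ hu1 (hPcsmul _ _ h1)
      rw [hscal, hkap]
  -- polarized Q formula
  have hQ2 : ∀ y1 y2 y1' y2' : V, A (A y1) = -(c • y1) → A (A y2) = -(d • y2) →
      A (A y1') = -(c • y1') → A (A y2') = -(d • y2') → ∀ x z : V,
      R x (y1 + y2) (y1' + y2') z + R x (y1' + y2') (y1 + y2) z
        = 2*⟪y1 + y2, y1' + y2'⟫*⟪x, z⟫ - ⟪x, y1 + y2⟫*⟪y1' + y2', z⟫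
          - ⟪x, y1' + y2'⟫*⟪y1 + y2, z⟫
          + k * (⟪x, A (y1 + y2)⟫*⟪A (y1' + y2'), z⟫
            + ⟪x, A (y1' + y2')⟫*⟪A (y1 + y2), z⟫) := by
    intro y1 y2 y1' y2' h1 h2 h1' h2' x z
    have hsum := hQ (y1 + y1') (y2 + y2') (hPcadd _ _ h1 h1') (hPdadd _ _ h2 h2') x z
    have hre : y1 + y1' + (y2 + y2') = (y1 + y2) + (y1' + y2') := by abel
    rw [hre] at hsum
    have ha := hQ y1 y2 h1 h2 x z
    have hb := hQ y1' y2' h1' h2' x z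
    set Y : V := y1 + y2
    set Y' : V := y1' + y2'
    have hcm : ⟪Y', Y⟫ = ⟪Y, Y'⟫ := real_inner_comm Y Y'
    simp only [map_add, LinearMap.add_apply, inner_add_left, inner_add_right] at hsum
    linear_combination hsum - ha - hb + ⟪x, z⟫ * hcm
  -- value facts
  have hvv : ⟪v, v⟫ = (1:ℝ) := by rw [real_inner_self_eq_norm_sq, hv]; norm_num
  have j1 : ⟪J v, v⟫ = 0 := by
    have h := hJskew v v
    have h2 : ⟪J v, v⟫ = ⟪v, J v⟫ := real_inner_comm v (J v)
    linarith
  have j2 : ⟪J w, w⟫ = 0 := by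
    have h := hJskew w w
    have h2 : ⟪J w, w⟫ = ⟪w, J w⟫ := real_inner_comm w (J w)
    linarith
  have j2' : ⟪w, J w⟫ = 0 := by rw [real_inner_comm]; exact j2
  have o1 : ⟪v, w⟫ = 0 := horth v w hvA hwA
  have o1' : ⟪w, v⟫ = 0 := by rw [real_inner_comm]; exact o1
  have o2 : ⟪J v, w⟫ = 0 := horth (J v) w (hPcJ v hvA) hwA
  have o2' : ⟪w, J v⟫ = 0 := by rw [real_inner_comm]; exact o2
  have o3 : ⟪v, J w⟫ = 0 := horth v (J w) hvA (hPdJ w hwA)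
  have o3' : ⟪J w, v⟫ = 0 := by rw [real_inner_comm]; exact o3
  have o4 : ⟪J v, J w⟫ = 0 := horth (J v) (J w) (hPcJ v hvA) (hPdJ w hwA)
  have o5 : ⟪v, A w⟫ = 0 := horth v (A w) hvA (hPdA w hwA)
  have o5' : ⟪A w, v⟫ = 0 := by rw [real_inner_comm]; exact o5
  have o6 : ⟪J v, A (J w)⟫ = 0 := horth (J v) (A (J w)) (hPcJ v hvA) (hPdA _ (hPdJ w hwA))
  have o7 : ⟪J v, A w⟫ = 0 := horth (J v) (A w) (hPcJ v hvA) (hPdA w hwA)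
  have o8 : ⟪A (J w), v⟫ = 0 := by
    rw [real_inner_comm]
    exact horth v (A (J w)) hvA (hPdA _ (hPdJ w hwA))
  have o9 : ⟪w, A (J v)⟫ = 0 := by
    rw [real_inner_comm]
    exact horth (A (J v)) w (hPcA _ (hPcJ v hvA)) hwA
  have t1 : ⟪A (J v), v⟫ = -(τ * ⟪A v, J v⟫) := by
    rw [hτ v, real_inner_smul_left, hJskew (A v) v]
    ring
  have t2 : ⟪w, A (J w)⟫ = -(τ * ⟪A w, J w⟫) := by
    rw [hτ w, real_inner_smul_right]
    have h1 : ⟪J (A w), w⟫ = -⟪A w, J w⟫ := hJskew (A w) w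
    have h2 : ⟪w, J (A w)⟫ = ⟪J (A w), w⟫ := real_inner_comm (J (A w)) w
    rw [h2, h1]
    ring
  -- the two middle-polarization instances
  have m1 := hQ2 0 (J w) 0 w hPc0 (hPdJ w hwA) hPc0 hwA (J v) v
  simp only [zero_add] at m1
  have m2 := hQ2 (J v) 0 0 (J w) (hPcJ v hvA) hPd0 hPc0 (hPdJ w hwA) w v
  simp only [zero_add, add_zero] at m2
  have sk1 := hskew (J v) w (J w) v
  have sk2 := hskew w (J w) (J v) v
  have bian := hbianchi (J v) (J w) w v
  simp only [j1, j2, j2', o1, o1', o2, o2', o3, o3', o4, o5, o5', o6, o7, o8, o9, t1, t2] at m1 m2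
  have hst : R v w w v = 1 := by
    have h := s16_star R A hskew hpair hAinj hAskew hE w hw v v
    rw [hvv, o1, o5] at h
    norm_num at h
    exact h
  have hX1 : R (J v) (J w) w v = 1 := by
    rw [hkahler v w w v, hst]
  have e1 : R (J v) w (J w) v = -1 := by
    have : R (J v) (J w) w v + R (J v) w (J w) v = 0 := by linarith [m1]
    linarith [hX1]
  have e2 : R w (J v) (J w) v = 1 := by linarith [sk1, e1]
  have e3 : R (J w) w (J v) v = -2 := by linarith [bian, hX1, e2]
  have e4 : R w (J w) (J v) v = 2 := by linarith [sk2, e3]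
  linear_combination (-(1:ℝ)/3)*m2 + (1/3)*e2 + (1/3)*e4
    - (k*⟪A w, J w⟫*⟪A v, J v⟫/3)*hτ2


end


/-- In the Kähler cvc(1) package with `dim V ≥ 4`, the positive
self-adjoint operator `-A∘A` has at most two distinct eigenvalues. -/
theorem stmt_16
    {V : Type*} [NormedAddCommGroup V] [InnerProductSpace ℝ V] [FiniteDimensional ℝ V]
    (hdim : 4 ≤ Module.finrank ℝ V)
    (J : V →ₗ[ℝ] V)
    (hJiso : ∀ x y : V, ⟪J x, J y⟫ = ⟪x, y⟫)
    (hJ2 : ∀ x : V, J (J x) = -x)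
    (R : V →ₗ[ℝ] V →ₗ[ℝ] V →ₗ[ℝ] V →ₗ[ℝ] ℝ)
    (hskew : ∀ X Y Z W : V, R X Y Z W = - R Y X Z W)
    (hpair : ∀ X Y Z W : V, R X Y Z W = R Z W X Y)
    (hbianchi : ∀ X Y Z W : V, R X Y Z W + R Y Z X W + R Z X Y W = 0)
    (hkahler : ∀ X Y Z W : V, R (J X) (J Y) Z W = R X Y Z W)
    (hsec : ∀ x y : V, ‖x‖ = 1 → ‖y‖ = 1 → ⟪x, y⟫ = 0 → 1 ≤ R y x x y)
    (A : V →ₗ[ℝ] V) (hAinv : Function.Bijective A)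
    (hAskew : ∀ x y : V, ⟪A x, y⟫ = -⟪x, A y⟫)
    (hE : ∀ v : V, ‖v‖ = 1 → ∀ w : V,
      (⟪w, v⟫ = 0 ∧ ∀ u : V, R w v v u = ⟪w, u⟫) ↔
        w ∈ (Submodule.span ℝ {v, A v})ᗮ) :
    ∃ c1 c2 : ℝ, ∀ c : ℝ,
      Module.End.HasEigenvalue (-(A ∘ₗ A) : Module.End ℝ V) c → c = c1 ∨ c = c2 := by
  have hAinj : Function.Injective A := hAinv.1
  have hJskew := s16_Jskew J hJiso hJ2
  obtain ⟨v0, hv0⟩ : ∃ v0 : V, v0 ≠ 0 := by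
    rw [← Module.finrank_pos_iff_exists_ne_zero (R := ℝ)]
    omega
  obtain ⟨τ, hτ, hτ2⟩ := s16_AJcomm R A J hJiso hJ2 hskew hpair hkahler hAinj hAskew hsec hE v0 hv0
  -- unit eigenvector extraction
  have hunit : ∀ cc : ℝ, Module.End.HasEigenvalue (-(A ∘ₗ A) : Module.End ℝ V) cc →
      ∃ u : V, ‖u‖ = 1 ∧ A (A u) = -(cc • u) := by
    intro cc hcc
    obtain ⟨x, hx⟩ := hcc.exists_hasEigenvector
    have hxne : x ≠ 0 := hx.2
    have happ : A (A x) = -(cc • x) := by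
      have h := hx.apply_eq_smul
      simp only [LinearMap.neg_apply, LinearMap.comp_apply] at h
      rw [← h, neg_neg]
    refine ⟨‖x‖⁻¹ • x, norm_smul_inv_norm hxne, ?_⟩
    rw [map_smul, map_smul, happ, smul_neg, smul_comm]
  -- the key contradiction with three distinct eigenvalues
  have key : ∀ c1 c2 c3 : ℝ, c1 ≠ c2 → c1 ≠ c3 → c2 ≠ c3 →
      Module.End.HasEigenvalue (-(A ∘ₗ A) : Module.End ℝ V) c1 →
      Module.End.HasEigenvalue (-(A ∘ₗ A) : Module.End ℝ V) c2 →
      Module.End.HasEigenvalue (-(A ∘ₗ A) : Module.End ℝ V) c3 → False := by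
    intro c1 c2 c3 h12 h13 h23 he1 he2 he3
    obtain ⟨u1, hu1n, hu1A⟩ := hunit c1 he1
    obtain ⟨u2, hu2n, hu2A⟩ := hunit c2 he2
    obtain ⟨u3, hu3n, hu3A⟩ := hunit c3 he3
    have x31 := s16_cross R A J hJiso hJ2 hskew hpair hbianchi hkahler hAinj hAskew hsec hE
      τ hτ hτ2 c3 c1 (Ne.symm h13) u3 u1 hu3n hu1n hu3A hu1A
    -- τ = 1
    have hp3τ : ⟪A u3, J u3⟫ = τ * ⟪A u3, J u3⟫ := by
      have h1 : ⟪A u3, J u3⟫ = -⟪u3, A (J u3)⟫ := hAskew u3 (J u3)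
      rw [hτ u3, real_inner_smul_right] at h1
      have h2 : ⟪J u3, A u3⟫ = -⟪u3, J (A u3)⟫ := hJskew u3 (A u3)
      have h3 : ⟪J u3, A u3⟫ = ⟪A u3, J u3⟫ := real_inner_comm (A u3) (J u3)
      linear_combination h1 - τ*h2 + τ*h3
    have hp3ne : ⟪A u3, J u3⟫ ≠ 0 := by
      intro h0
      rw [h0] at x31
      norm_num at x31
    have hτ1 : τ = 1 := by
      have h : (1 - τ) * ⟪A u3, J u3⟫ = 0 := by linear_combination hp3τ
      rcases mul_eq_zero.mp h with h | h
      · linarith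
      · exact absurd h hp3ne
    set k3 : ℝ := s16kappa R A u3 with hk3def
    set p3 : ℝ := ⟪A u3, J u3⟫ with hp3def
    set p0 : ℝ := 1 / ((k3/3) * p3) with hp0def
    -- everyone with eigenvalue ≠ c3 has the same inner product p0
    have hpall : ∀ (cc : ℝ), cc ≠ c3 → ∀ e : V, ‖e‖ = 1 → A (A e) = -(cc • e) →
        ⟪A e, J e⟫ = p0 := by
      intro cc hcc e he heA
      have hx := s16_cross R A J hJiso hJ2 hskew hpair hbianchi hkahler hAinj hAskew hsec hE
        τ hτ hτ2 c3 cc (Ne.symm hcc) u3 e hu3n he hu3A heA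
      have hk3p3 : (k3/3) * p3 ≠ 0 := by
        intro h0
        have : (k3/3) * (p3 * ⟪A e, J e⟫) = ((k3/3) * p3) * ⟪A e, J e⟫ := by ring
        rw [this, h0, zero_mul] at hx
        norm_num at hx
      rw [hp0def, eq_div_iff hk3p3]
      linear_combination hx
    -- eigenvalue determination
    have hdet : ∀ (cc : ℝ), cc ≠ c3 → ∀ u : V, ‖u‖ = 1 → A (A u) = -(cc • u) → cc = p0^2 := by
      intro cc hcc u hun huA
      have hune : u ≠ 0 := by intro h; rw [h] at hun; simp at hun
      have hpu : ⟪A u, J u⟫ = p0 := hpall cc hcc u hun huA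
      have huu : ⟪u, u⟫ = (1:ℝ) := by rw [real_inner_self_eq_norm_sq, hun]; norm_num
      have hAu3 : A (A (A u)) = -(cc • A u) := by
        rw [huA]; simp only [map_neg, map_smul]
      have hJAu : A (A (J (A u))) = -(cc • J (A u)) := by
        rw [hτ (A u), map_smul, hτ (A (A u)), smul_smul, hτ2, one_smul, ← map_smul, hAu3]
        simp only [map_neg, map_smul]
      set r : V := -(J (A u)) - p0 • u with hrdef
      have hrA : A (A r) = -(cc • r) := by
        rw [hrdef]
        simp only [map_sub, map_neg, map_smul, hJAu, huA]
        rw [smul_sub, smul_neg]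
        module
      have hru : ⟪r, u⟫ = 0 := by
        rw [hrdef]
        simp only [inner_sub_left, inner_neg_left, real_inner_smul_left]
        have h1 : ⟪J (A u), u⟫ = -⟪A u, J u⟫ := hJskew (A u) u
        rw [h1, huu, hpu]
        ring
      have hr0 : r = 0 := by
        by_contra hrne
        have hrn : ‖r‖ ≠ 0 := norm_ne_zero_iff.mpr hrne
        set e : V := ‖r‖⁻¹ • r with hedef
        have he1 : ‖e‖ = 1 := norm_smul_inv_norm hrne
        have heA : A (A e) = -(cc • e) := by
          rw [hedef, map_smul, map_smul, hrA, smul_neg, smul_comm]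
        have hue : ⟪u, e⟫ = 0 := by
          rw [hedef, real_inner_smul_right, real_inner_comm r u, hru, mul_zero]
        have hcs : (3/5:ℝ)^2 + (4/5:ℝ)^2 = 1 := by norm_num
        have hxn : ‖(3/5:ℝ) • u + (4/5:ℝ) • e‖ = 1 := s16_unit_combo u e hun he1 hue _ _ hcs
        have hxA : A (A ((3/5:ℝ) • u + (4/5:ℝ) • e)) = -(cc • ((3/5:ℝ) • u + (4/5:ℝ) • e)) := by
          simp only [map_add, map_smul, huA, heA, smul_neg, smul_add]
          rw [smul_comm cc (3/5:ℝ) u, smul_comm cc (4/5:ℝ) e]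
          abel
        have hpx := hpall cc hcc _ hxn hxA
        have hpe := hpall cc hcc e he1 heA
        have hexp : ⟪A ((3/5:ℝ) • u + (4/5:ℝ) • e), J ((3/5:ℝ) • u + (4/5:ℝ) • e)⟫
            = (3/5:ℝ)*((3/5:ℝ)*⟪A u, J u⟫) + (3/5:ℝ)*((4/5:ℝ)*⟪A u, J e⟫)
              + (4/5:ℝ)*((3/5:ℝ)*⟪A e, J u⟫) + (4/5:ℝ)*((4/5:ℝ)*⟪A e, J e⟫) := by
          simp only [map_add, map_smul, inner_add_left, inner_add_right,
            real_inner_smul_left, real_inner_smul_right]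
          ring
        have hsym : ⟪A u, J e⟫ = ⟪A e, J u⟫ := by
          have h1 : ⟪A u, J e⟫ = -⟪u, A (J e)⟫ := hAskew u (J e)
          rw [hτ e, hτ1, one_smul] at h1
          have h2 : ⟪J u, A e⟫ = -⟪u, J (A e)⟫ := hJskew u (A e)
          have h3 : ⟪J u, A e⟫ = ⟪A e, J u⟫ := real_inner_comm (A e) (J u)
          linarith
        have hAuJe : ⟪A u, J e⟫ = 0 := by
          rw [hexp, hpu, hpe, hsym] at hpx
          linarith
        have hre : ⟪r, e⟫ = 0 := by
          rw [hrdef]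
          simp only [inner_sub_left, inner_neg_left, real_inner_smul_left]
          have h1 : ⟪J (A u), e⟫ = -⟪A u, J e⟫ := hJskew (A u) e
          rw [h1, hAuJe, hue]
          ring
        have hre2 : ⟪r, e⟫ = ‖r‖⁻¹ * ⟪r, r⟫ := by
          rw [hedef, real_inner_smul_right]
        have hrr : (0:ℝ) < ⟪r, r⟫ := by
          rw [real_inner_self_eq_norm_sq]
          exact pow_pos (norm_pos_iff.mpr hrne) 2
        rw [hre] at hre2
        have : (0:ℝ) < ‖r‖⁻¹ * ⟪r, r⟫ := by positivity
        linarith [hre2, this]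
      have hJAu0 : J (A u) = -(p0 • u) := by
        have h : -(J (A u)) - p0 • u = 0 := hr0
        have h2 : -(J (A u)) = p0 • u := by
          rw [sub_eq_zero] at h
          exact h
        rw [← h2, neg_neg]
      have hAu : A u = p0 • J u := by
        have h := congrArg J hJAu0
        rw [hJ2] at h
        simp only [map_neg, map_smul] at h
        have := neg_injective h
        rw [this]
      have hfin : A (A u) = -((p0^2) • u) := by
        rw [hAu, map_smul, hτ u, hτ1, one_smul, hJAu0]
        rw [smul_neg, smul_smul]
        congr 1
        rw [pow_two]
      rw [huA] at hfin
      have h0 : (cc - p0^2) • u = 0 := by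
        rw [sub_smul]
        have := neg_injective hfin
        rw [this]
        abel
      rcases smul_eq_zero.mp h0 with h | h
      · linarith [sub_eq_zero.mp (by linarith [h] : cc - p0^2 = 0)]
      · exact absurd h hune
    have hc1 : c1 = p0^2 := hdet c1 h13 u1 hu1n hu1A
    have hc2 : c2 = p0^2 := hdet c2 h23 u2 hu2n hu2A
    exact h12 (hc1.trans hc2.symm)
  -- assemble the conclusion
  by_cases h1 : ∃ cc : ℝ, Module.End.HasEigenvalue (-(A ∘ₗ A) : Module.End ℝ V) cc
  · obtain ⟨a, ha⟩ := h1
    by_cases h2 : ∃ b : ℝ, Module.End.HasEigenvalue (-(A ∘ₗ A) : Module.End ℝ V) b ∧ b ≠ a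
    · obtain ⟨b, hb, hba⟩ := h2
      refine ⟨a, b, ?_⟩
      intro cc hcc
      by_contra hno
      push_neg at hno
      exact key cc a b hno.1 hno.2 (Ne.symm hba) hcc ha hb
    · push_neg at h2
      exact ⟨a, a, fun cc hcc => Or.inl (h2 cc hcc)⟩
  · push_neg at h1
    exact ⟨0, 0, fun cc hcc => absurd hcc (h1 cc)⟩
end

section
/- Under the Kähler cvc(1) package described in the context, assume dim V ≥ 6. Then a 2-dimensional subspace σ ⊆ V satisfies J(σ) = σ if and only if A(σ) = σ. -/
open scoped RealInnerProductSpace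

/-- Auxiliary: if the rank-one bilinear forms attached to `a` and `b` agree, then `a = ± b`. -/
lemma rank_one_aux {V : Type*} [NormedAddCommGroup V] [InnerProductSpace ℝ V]
    (a b : V) (h : ∀ x y : V, ⟪x, a⟫ * ⟪y, a⟫ = ⟪x, b⟫ * ⟪y, b⟫) : a = b ∨ a = -b := by
  have hposs : ∀ x : V, x ≠ 0 → (0:ℝ) < ⟪x, x⟫ := by
    intro x hx
    rcases lt_or_eq_of_le (real_inner_self_nonneg (x := x)) with h' | h'
    · exact h'
    · exact absurd (inner_self_eq_zero.mp h'.symm) hx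
  have hv : ∀ x : V, ⟪x, a⟫ • a = ⟪x, b⟫ • b := by
    intro x
    apply ext_inner_right ℝ
    intro y
    rw [real_inner_smul_left, real_inner_smul_left, real_inner_comm y a, real_inner_comm y b]
    exact h x y
  by_cases ha : a = 0
  · left
    have hb := hv b
    rw [ha] at hb
    simp only [inner_zero_right, zero_smul] at hb
    rcases smul_eq_zero.mp hb.symm with h0 | h0
    · rw [ha, inner_self_eq_zero.mp h0]
    · rw [ha, h0]
  · have hp : (0:ℝ) < ⟪a, a⟫ := hposs a ha
    have h1 := hv a
    have hb : b ≠ 0 := by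
      intro hb0
      rw [hb0] at h1
      simp only [smul_zero] at h1
      rcases smul_eq_zero.mp h1 with h0 | h0
      · exact absurd h0 (ne_of_gt hp)
      · exact ha h0
    have hr : (0:ℝ) < ⟪b, b⟫ := hposs b hb
    have hpq : ⟪a, a⟫ * ⟪a, a⟫ = ⟪a, b⟫ * ⟪a, b⟫ := h a a
    have hqr : ⟪b, a⟫ * ⟪b, a⟫ = ⟪b, b⟫ * ⟪b, b⟫ := h b b
    rw [real_inner_comm a b] at hqr
    have hpr : ⟪a, a⟫ = ⟪b, b⟫ := by nlinarith
    have hcases : ⟪a, b⟫ = ⟪a, a⟫ ∨ ⟪a, b⟫ = -⟪a, a⟫ := by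
      have : (⟪a, b⟫ - ⟪a, a⟫) * (⟪a, b⟫ + ⟪a, a⟫) = 0 := by nlinarith
      rcases mul_eq_zero.mp this with h0 | h0
      · left; linarith
      · right; linarith
    rcases hcases with h0 | h0
    · left
      refine smul_right_injective V (ne_of_gt hp) ?_
      show ⟪a, a⟫ • a = ⟪a, a⟫ • b
      rw [h1, h0]
    · right
      refine smul_right_injective V (ne_of_gt hp) ?_
      show ⟪a, a⟫ • a = ⟪a, a⟫ • (-b)
      rw [h1, h0, neg_smul, smul_neg]

set_option maxHeartbeats 1600000 in
/-- In the Kähler cvc(1) package with `dim V ≥ 6`, a 2-dimensional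
subspace `σ` is `J`-invariant iff it is `A`-invariant. -/
theorem stmt_19
    {V : Type*} [NormedAddCommGroup V] [InnerProductSpace ℝ V] [FiniteDimensional ℝ V]
    (hdim : 6 ≤ Module.finrank ℝ V)
    (J : V →ₗ[ℝ] V)
    (hJiso : ∀ x y : V, ⟪J x, J y⟫ = ⟪x, y⟫)
    (hJ2 : ∀ x : V, J (J x) = -x)
    (R : V →ₗ[ℝ] V →ₗ[ℝ] V →ₗ[ℝ] V →ₗ[ℝ] ℝ)
    (hskew : ∀ X Y Z W : V, R X Y Z W = - R Y X Z W)
    (hpair : ∀ X Y Z W : V, R X Y Z W = R Z W X Y)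
    (hbianchi : ∀ X Y Z W : V, R X Y Z W + R Y Z X W + R Z X Y W = 0)
    (hkahler : ∀ X Y Z W : V, R (J X) (J Y) Z W = R X Y Z W)
    (hsec : ∀ x y : V, ‖x‖ = 1 → ‖y‖ = 1 → ⟪x, y⟫ = 0 → 1 ≤ R y x x y)
    (A : V →ₗ[ℝ] V) (hAinv : Function.Bijective A)
    (hAskew : ∀ x y : V, ⟪A x, y⟫ = -⟪x, A y⟫)
    (hE : ∀ v : V, ‖v‖ = 1 → ∀ w : V,
      (⟪w, v⟫ = 0 ∧ ∀ u : V, R w v v u = ⟪w, u⟫) ↔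
        w ∈ (Submodule.span ℝ {v, A v})ᗮ)
    (σ : Submodule ℝ V) (hσ : Module.finrank ℝ σ = 2) :
    Submodule.map J σ = σ ↔ Submodule.map A σ = σ := by
  classical
  -- Basic consequences of the symmetries
  have hJadj : ∀ x y : V, ⟪J x, y⟫ = -⟪x, J y⟫ := by
    intro x y
    have : ⟪J x, y⟫ = ⟪J x, -J (J y)⟫ := by rw [hJ2 y, neg_neg]
    rw [this, inner_neg_right, hJiso]
  have hJinj : Function.Injective J := by
    intro x y hxy
    have : J (J x) = J (J y) := by rw [hxy]
    rw [hJ2, hJ2] at this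
    exact neg_injective this
  have hAinj : Function.Injective A := hAinv.1
  have hskew2 : ∀ a b c d : V, R a b c d = - R a b d c := by
    intro a b c d
    rw [hpair a b c d, hskew c d a b, hpair d c a b]
  have hzero1 : ∀ a c d : V, R a a c d = 0 := by
    intro a c d
    have := hskew a a c d
    linarith
  have hzero2 : ∀ a b c : V, R a b c c = 0 := by
    intro a b c
    have := hskew2 a b c c
    linarith
  have hsym : ∀ x v y : V, R x v v y = R y v v x := by
    intro x v y
    calc R x v v y = R v y x v := hpair _ _ _ _
    _ = - R y v x v := hskew _ _ _ _
    _ = R y v v x := by rw [hskew2 y v x v]; ring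
  have hAdiag : ∀ v : V, ⟪v, A v⟫ = 0 := by
    intro v
    have h := hAskew v v
    have h2 : ⟪A v, v⟫ = ⟪v, A v⟫ := real_inner_comm v (A v)
    linarith
  have hpos : ∀ x : V, x ≠ 0 → (0:ℝ) < ⟪x, x⟫ := by
    intro x hx
    rcases lt_or_eq_of_le (real_inner_self_nonneg (x := x)) with h' | h'
    · exact h'
    · exact absurd (inner_self_eq_zero.mp h'.symm) hx
  -- Existence of the pointwise Jacobi constant
  have hPunit : ∀ v : V, ‖v‖ = 1 → ∃ c : ℝ, c ≠ 0 ∧ ∀ x y : V,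
      R x v v y = ⟪v, v⟫ * ⟪x, y⟫ - ⟪x, v⟫ * ⟪y, v⟫ + c * (⟪x, A v⟫ * ⟪y, A v⟫) := by
    intro v hv
    have hv0 : v ≠ 0 := by intro h; rw [h, norm_zero] at hv; norm_num at hv
    have hvv : ⟪v, v⟫ = 1 := by rw [real_inner_self_eq_norm_sq, hv]; norm_num
    have he0 : A v ≠ 0 := fun h => hv0 (hAinj (by rw [h, map_zero]))
    have hee : (0:ℝ) < ⟪A v, A v⟫ := hpos _ he0
    have hD : ⟪A v, A v⟫ ≠ 0 := ne_of_gt hee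
    have hve : ⟪v, A v⟫ = 0 := hAdiag v
    have hev : ⟪A v, v⟫ = 0 := by
      have := hAskew v v; linarith [hAdiag v]
    have hEmem : ∀ w : V, ⟪w, v⟫ = 0 → ⟪w, A v⟫ = 0 → ∀ u : V, R w v v u = ⟪w, u⟫ := by
      intro w h1 h2
      have hmem : w ∈ (Submodule.span ℝ ({v, A v} : Set V))ᗮ := by
        rw [Submodule.mem_orthogonal]
        intro u hu
        rw [Submodule.mem_span_pair] at hu
        obtain ⟨m, n, rfl⟩ := hu
        rw [inner_add_left, real_inner_smul_left, real_inner_smul_left,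
          real_inner_comm w v, real_inner_comm w (A v), h1, h2]
        ring
      exact ((hE v hv w).mpr hmem).2
    have hproj : ∀ x : V, ⟪x - ⟪x, v⟫ • v - (⟪x, A v⟫ / ⟪A v, A v⟫) • A v, v⟫ = 0 ∧
        ⟪x - ⟪x, v⟫ • v - (⟪x, A v⟫ / ⟪A v, A v⟫) • A v, A v⟫ = 0 := by
      intro x
      constructor
      · rw [inner_sub_left, inner_sub_left, real_inner_smul_left, real_inner_smul_left, hvv, hev]
        ring
      · rw [inner_sub_left, inner_sub_left, real_inner_smul_left, real_inner_smul_left, hve]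
        field_simp
        ring
    have hRq : ∀ x u : V, R (x - ⟪x, v⟫ • v - (⟪x, A v⟫ / ⟪A v, A v⟫) • A v) v v u
        = ⟪x - ⟪x, v⟫ • v - (⟪x, A v⟫ / ⟪A v, A v⟫) • A v, u⟫ :=
      fun x u => hEmem _ (hproj x).1 (hproj x).2 u
    have hdec : ∀ x : V, ⟪x, v⟫ • v + (⟪x, A v⟫ / ⟪A v, A v⟫) • A v
        + (x - ⟪x, v⟫ • v - (⟪x, A v⟫ / ⟪A v, A v⟫) • A v) = x := by
      intro x; abel
    have hRevv : R (A v) v v v = 0 := by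
      have := hskew2 (A v) v v v; linarith
    have hRe : ∀ y : V, R (A v) v v y = (⟪y, A v⟫ / ⟪A v, A v⟫) * R (A v) v v (A v) := by
      intro y
      conv_lhs => rw [← hdec y]
      simp only [map_add, map_smul, smul_eq_mul]
      rw [hRevv]
      have h1 : R (A v) v v (y - ⟪y, v⟫ • v - (⟪y, A v⟫ / ⟪A v, A v⟫) • A v)
          = ⟪y - ⟪y, v⟫ • v - (⟪y, A v⟫ / ⟪A v, A v⟫) • A v, A v⟫ := by
        rw [hsym (A v) v _]
        exact hRq y (A v)
      rw [h1, (hproj y).2]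
      ring
    have hform : ∀ x y : V, R x v v y = ⟪v, v⟫ * ⟪x, y⟫ - ⟪x, v⟫ * ⟪y, v⟫
        + ((R (A v) v v (A v) - ⟪A v, A v⟫) / (⟪A v, A v⟫ * ⟪A v, A v⟫))
          * (⟪x, A v⟫ * ⟪y, A v⟫) := by
      intro x y
      conv_lhs => rw [← hdec x]
      simp only [LinearMap.add_apply, LinearMap.smul_apply, map_add, map_smul, smul_eq_mul]
      rw [hzero1, hRe y, hRq x y]
      rw [inner_sub_left, inner_sub_left, real_inner_smul_left, real_inner_smul_left,
        real_inner_comm y v, real_inner_comm y (A v), hvv]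
      field_simp
      ring
    refine ⟨(R (A v) v v (A v) - ⟪A v, A v⟫) / (⟪A v, A v⟫ * ⟪A v, A v⟫), ?_, hform⟩
    intro hc
    have hL : R (A v) v v (A v) = ⟪A v, A v⟫ := by
      rcases div_eq_zero_iff.mp hc with h | h
      · linarith
      · exact absurd h (by positivity)
    have hEAv : ∀ u : V, R (A v) v v u = ⟪A v, u⟫ := by
      intro u
      rw [hform (A v) u, hc, hvv, hev]
      ring
    have hmem := (hE v hv (A v)).mp ⟨hev, hEAv⟩
    rw [Submodule.mem_orthogonal] at hmem
    have : ⟪A v, A v⟫ = 0 := hmem (A v) (Submodule.subset_span (by simp))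
    exact hD this
  have hPsmul : ∀ (v : V) (c r : ℝ), (∀ x y : V,
      R x v v y = ⟪v, v⟫ * ⟪x, y⟫ - ⟪x, v⟫ * ⟪y, v⟫ + c * (⟪x, A v⟫ * ⟪y, A v⟫)) →
      ∀ x y : V, R x (r • v) (r • v) y = ⟪r • v, r • v⟫ * ⟪x, y⟫ - ⟪x, r • v⟫ * ⟪y, r • v⟫
        + c * (⟪x, A (r • v)⟫ * ⟪y, A (r • v)⟫) := by
    intro v c r hP x y
    have h1 : R x (r • v) (r • v) y = r * (r * R x v v y) := by
      simp only [map_smul, LinearMap.smul_apply, smul_eq_mul]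
    rw [h1, hP x y]
    simp only [map_smul, real_inner_smul_left, real_inner_smul_right]
    ring
  have hPex : ∀ v : V, v ≠ 0 → ∃ c : ℝ, c ≠ 0 ∧ ∀ x y : V,
      R x v v y = ⟪v, v⟫ * ⟪x, y⟫ - ⟪x, v⟫ * ⟪y, v⟫ + c * (⟪x, A v⟫ * ⟪y, A v⟫) := by
    intro v hv
    have hnorm : ‖(‖v‖⁻¹ • v : V)‖ = 1 := norm_smul_inv_norm hv
    obtain ⟨c, hc, hP⟩ := hPunit (‖v‖⁻¹ • v) hnorm
    refine ⟨c, hc, ?_⟩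
    have := hPsmul (‖v‖⁻¹ • v) c ‖v‖ hP
    have hvv : (‖v‖ : ℝ) • (‖v‖⁻¹ • v) = v := by
      rw [smul_smul, mul_inv_cancel₀ (norm_ne_zero_iff.mpr hv), one_smul]
    rwa [hvv] at this
  have hPuniq : ∀ (v : V) (c c' : ℝ), v ≠ 0 →
      (∀ x y : V, R x v v y = ⟪v, v⟫ * ⟪x, y⟫ - ⟪x, v⟫ * ⟪y, v⟫ + c * (⟪x, A v⟫ * ⟪y, A v⟫)) →
      (∀ x y : V, R x v v y = ⟪v, v⟫ * ⟪x, y⟫ - ⟪x, v⟫ * ⟪y, v⟫ + c' * (⟪x, A v⟫ * ⟪y, A v⟫)) →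
      c = c' := by
    intro v c c' hv h1 h2
    have hAv : A v ≠ 0 := fun h => hv (hAinj (by rw [h, map_zero]))
    have hpos2 : (0:ℝ) < ⟪A v, A v⟫ := hpos _ hAv
    have := (h1 (A v) (A v)).symm.trans (h2 (A v) (A v))
    have hkey : c * (⟪A v, A v⟫ * ⟪A v, A v⟫) = c' * (⟪A v, A v⟫ * ⟪A v, A v⟫) := by linarith
    have : ⟪A v, A v⟫ * ⟪A v, A v⟫ ≠ 0 := by nlinarith
    exact mul_right_cancel₀ this hkey
  -- existence of a unit vector orthogonal to four given vectors
  have hperp : ∀ a b c d : V, ∃ p : V, ‖p‖ = 1 ∧ ⟪a, p⟫ = 0 ∧ ⟪b, p⟫ = 0 ∧ ⟪c, p⟫ = 0 ∧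
      ⟪d, p⟫ = 0 := by
    intro a b c d
    set K : Submodule ℝ V := (ℝ ∙ a) ⊔ (ℝ ∙ b) ⊔ (ℝ ∙ c) ⊔ (ℝ ∙ d) with hKdef
    have hsing : ∀ w : V, Module.finrank ℝ (ℝ ∙ w : Submodule ℝ V) ≤ 1 := by
      intro w
      by_cases h : w = 0
      · rw [h, Submodule.span_zero_singleton, finrank_bot]
        norm_num
      · rw [finrank_span_singleton h]
    have hKle : Module.finrank ℝ K ≤ 4 := by
      have h1 := Submodule.finrank_add_le_finrank_add_finrank
        ((ℝ ∙ a) ⊔ (ℝ ∙ b) ⊔ (ℝ ∙ c)) (ℝ ∙ d)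
      have h2 := Submodule.finrank_add_le_finrank_add_finrank ((ℝ ∙ a) ⊔ (ℝ ∙ b)) (ℝ ∙ c)
      have h3 := Submodule.finrank_add_le_finrank_add_finrank (ℝ ∙ a) (ℝ ∙ b)
      have ha := hsing a
      have hb := hsing b
      have hc := hsing c
      have hd := hsing d
      rw [hKdef]
      omega
    have horth : 0 < Module.finrank ℝ Kᗮ := by
      have := Submodule.finrank_add_finrank_orthogonal K
      omega
    obtain ⟨x, hx⟩ := Module.finrank_pos_iff_exists_ne_zero.mp horth
    have hx0 : (x : V) ≠ 0 := fun h => hx (Subtype.ext h)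
    have hz : ∀ w : V, w ∈ K → ⟪w, (x : V)⟫ = 0 :=
      fun w hw => (Submodule.mem_orthogonal K (x : V)).mp x.2 w hw
    have hmema : a ∈ K :=
      Submodule.mem_sup_left (Submodule.mem_sup_left (Submodule.mem_sup_left
        (Submodule.mem_span_singleton_self a)))
    have hmemb : b ∈ K :=
      Submodule.mem_sup_left (Submodule.mem_sup_left (Submodule.mem_sup_right
        (Submodule.mem_span_singleton_self b)))
    have hmemc : c ∈ K :=
      Submodule.mem_sup_left (Submodule.mem_sup_right (Submodule.mem_span_singleton_self c))
    have hmemd : d ∈ K :=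
      Submodule.mem_sup_right (Submodule.mem_span_singleton_self d)
    refine ⟨‖(x : V)‖⁻¹ • (x : V), norm_smul_inv_norm hx0, ?_, ?_, ?_, ?_⟩
    · rw [real_inner_smul_right, hz a hmema]; ring
    · rw [real_inner_smul_right, hz b hmemb]; ring
    · rw [real_inner_smul_right, hz c hmemc]; ring
    · rw [real_inner_smul_right, hz d hmemd]; ring
  -- the constant is global
  have hconst : ∀ (u v : V) (cu cv : ℝ), u ≠ 0 → v ≠ 0 →
      (∀ x y : V, R x u u y = ⟪u, u⟫ * ⟪x, y⟫ - ⟪x, u⟫ * ⟪y, u⟫ + cu * (⟪x, A u⟫ * ⟪y, A u⟫)) →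
      (∀ x y : V, R x v v y = ⟪v, v⟫ * ⟪x, y⟫ - ⟪x, v⟫ * ⟪y, v⟫ + cv * (⟪x, A v⟫ * ⟪y, A v⟫)) →
      cu = cv := by
    have hconstOrtho : ∀ (u v : V) (cu cv : ℝ), ‖u‖ = 1 → ‖v‖ = 1 → ⟪u, v⟫ = 0 →
        (∀ x y : V, R x u u y = ⟪u, u⟫ * ⟪x, y⟫ - ⟪x, u⟫ * ⟪y, u⟫ + cu * (⟪x, A u⟫ * ⟪y, A u⟫)) →
        (∀ x y : V, R x v v y = ⟪v, v⟫ * ⟪x, y⟫ - ⟪x, v⟫ * ⟪y, v⟫ + cv * (⟪x, A v⟫ * ⟪y, A v⟫)) →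
        cu = cv := by
      intro u v cu cv hu hv huv hPu hPv
      have huu : ⟪u, u⟫ = 1 := by rw [real_inner_self_eq_norm_sq, hu]; norm_num
      have hvv' : ⟪v, v⟫ = 1 := by rw [real_inner_self_eq_norm_sq, hv]; norm_num
      have hvu : ⟪v, u⟫ = 0 := by rw [real_inner_comm]; exact huv
      have hupv : u + v ≠ 0 := by
        intro h
        have h2 : ⟪u, u + v⟫ = 0 := by rw [h, inner_zero_right]
        rw [inner_add_right, huu, huv] at h2
        norm_num at h2
      have humv : u - v ≠ 0 := by
        intro h
        have h2 : ⟪u, u - v⟫ = 0 := by rw [h, inner_zero_right]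
        rw [inner_sub_right, huu, huv] at h2
        norm_num at h2
      obtain ⟨cp, hcp, hPp⟩ := hPex (u + v) hupv
      obtain ⟨cm, hcm, hPm⟩ := hPex (u - v) humv
      have key : ∀ x : V,
          cp * ((⟪x, A u⟫ + ⟪x, A v⟫) * (⟪x, A u⟫ + ⟪x, A v⟫))
          + cm * ((⟪x, A u⟫ - ⟪x, A v⟫) * (⟪x, A u⟫ - ⟪x, A v⟫))
          = 2 * (cu * (⟪x, A u⟫ * ⟪x, A u⟫)) + 2 * (cv * (⟪x, A v⟫ * ⟪x, A v⟫)) := by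
        intro x
        have hpar : R x (u + v) (u + v) x + R x (u - v) (u - v) x
            = 2 * R x u u x + 2 * R x v v x := by
          have e1 : R x (u + v) = R x u + R x v := map_add (R x) u v
          have e2 : R x (u - v) = R x u - R x v := map_sub (R x) u v
          rw [e1, e2]
          simp only [LinearMap.add_apply, LinearMap.sub_apply, map_add, map_sub]
          ring
        have h1 := hPp x x
        have h2 := hPm x x
        have h3 := hPu x x
        have h4 := hPv x x
        rw [h1, h2, h3, h4] at hpar
        simp only [map_add, map_sub, inner_add_left, inner_add_right,
          inner_sub_left, inner_sub_right] at hpar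
        linear_combination hpar
      obtain ⟨xu, hxu⟩ := hAinv.2 (-u)
      obtain ⟨xv, hxv⟩ := hAinv.2 (-v)
      have e1 : ⟪xu, A u⟫ = 1 := by
        have h := hAskew xu u
        rw [hxu, inner_neg_left, huu] at h
        linarith
      have e2 : ⟪xu, A v⟫ = 0 := by
        have h := hAskew xu v
        rw [hxu, inner_neg_left, huv] at h
        linarith
      have e3 : ⟪xv, A u⟫ = 0 := by
        have h := hAskew xv u
        rw [hxv, inner_neg_left, hvu] at h
        linarith
      have e4 : ⟪xv, A v⟫ = 1 := by
        have h := hAskew xv v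
        rw [hxv, inner_neg_left, hvv'] at h
        linarith
      have k1 := key xu
      rw [e1, e2] at k1
      have k2 := key xv
      rw [e3, e4] at k2
      nlinarith [k1, k2]
    intro u v cu cv hu hv hPu hPv
    obtain ⟨p, hp1, hpu, hpv, -, -⟩ := hperp u v 0 0
    have hp0 : p ≠ 0 := by intro h; rw [h, norm_zero] at hp1; norm_num at hp1
    obtain ⟨cq, hcq, hPq⟩ := hPex p hp0
    have hu1 : ‖(‖u‖⁻¹ • u : V)‖ = 1 := norm_smul_inv_norm hu
    have hv1 : ‖(‖v‖⁻¹ • v : V)‖ = 1 := norm_smul_inv_norm hv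
    have hPu' := hPsmul u cu ‖u‖⁻¹ hPu
    have hPv' := hPsmul v cv ‖v‖⁻¹ hPv
    have hup : ⟪(‖u‖⁻¹ • u : V), p⟫ = 0 := by
      rw [real_inner_smul_left, hpu]; ring
    have hvp : ⟪(‖v‖⁻¹ • v : V), p⟫ = 0 := by
      rw [real_inner_smul_left, hpv]; ring
    have q1 := hconstOrtho (‖u‖⁻¹ • u) p cu cq hu1 hp1 hup hPu' hPq
    have q2 := hconstOrtho (‖v‖⁻¹ • v) p cv cq hv1 hp1 hvp hPv' hPq
    rw [q1, q2]
  -- fix the global constant c₀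
  have hex : ∃ v₀ : V, v₀ ≠ 0 := by
    have : 0 < Module.finrank ℝ V := by omega
    obtain ⟨v₀, hv₀⟩ := Module.finrank_pos_iff_exists_ne_zero.mp this
    exact ⟨v₀, hv₀⟩
  obtain ⟨v₀, hv₀⟩ := hex
  obtain ⟨c₀, hc₀, hP₀⟩ := hPex v₀ hv₀
  have hPall : ∀ v : V, ∀ x y : V,
      R x v v y = ⟪v, v⟫ * ⟪x, y⟫ - ⟪x, v⟫ * ⟪y, v⟫ + c₀ * (⟪x, A v⟫ * ⟪y, A v⟫) := by
    intro v
    by_cases hv : v = 0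
    · intro x y
      simp [hv, hzero2]
    · obtain ⟨c, hc, hP⟩ := hPex v hv
      have : c = c₀ := hconst v v₀ c c₀ hv hv₀ hP hP₀
      rw [← this]
      exact hP
  -- polarized formula
  have hK : ∀ x u v y : V, R x u v y + R x v u y =
      2 * ⟪u, v⟫ * ⟪x, y⟫ - ⟪x, u⟫ * ⟪y, v⟫ - ⟪x, v⟫ * ⟪y, u⟫
      + c₀ * (⟪x, A u⟫ * ⟪y, A v⟫ + ⟪x, A v⟫ * ⟪y, A u⟫) := by
    intro x u v y
    have h := hPall (u + v) x y
    have h1 := hPall u x y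
    have h2 := hPall v x y
    have hexp : R x (u + v) (u + v) y
        = R x u u y + R x u v y + R x v u y + R x v v y := by
      have e1 : R x (u + v) = R x u + R x v := map_add (R x) u v
      rw [e1]
      simp only [LinearMap.add_apply, map_add]
      ring
    rw [hexp] at h
    simp only [map_add, inner_add_left, inner_add_right] at h
    linear_combination h - h1 - h2 - (inner ℝ x y : ℝ) * real_inner_comm v u
  -- A almost commutes with J
  have hsig : ∀ u : V, ∃ s : ℝ, s ≠ 0 ∧ A (J u) = s • J (A u) := by
    intro u
    have hstar : ∀ x y : V, R (J x) (J u) (J u) (J y) = R x u u y := by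
      intro x y
      calc R (J x) (J u) (J u) (J y) = R x u (J u) (J y) := hkahler x u (J u) (J y)
      _ = R (J u) (J y) x u := hpair _ _ _ _
      _ = R u y x u := hkahler u y x u
      _ = R x u u y := (hpair x u u y).symm
    have key0 : ∀ x y : V, ⟪J x, A (J u)⟫ * ⟪J y, A (J u)⟫ = ⟪x, A u⟫ * ⟪y, A u⟫ := by
      intro x y
      have h1 := hPall (J u) (J x) (J y)
      have h2 := hPall u x y
      have h3 := hstar x y
      rw [hJiso u u, hJiso x u, hJiso y u, hJiso x y] at h1
      have h4 : c₀ * (⟪J x, A (J u)⟫ * ⟪J y, A (J u)⟫) = c₀ * (⟪x, A u⟫ * ⟪y, A u⟫) := by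
        linear_combination h2 + h3 - h1
      exact mul_left_cancel₀ hc₀ h4
    have key : ∀ x y : V, ⟪x, A (J u)⟫ * ⟪y, A (J u)⟫ = ⟪x, J (A u)⟫ * ⟪y, J (A u)⟫ := by
      intro x y
      have h := key0 (-(J x)) (-(J y))
      rw [map_neg, map_neg, hJ2, hJ2, neg_neg, neg_neg] at h
      rw [inner_neg_left, inner_neg_left] at h
      have hx' : ⟪J x, A u⟫ = -⟪x, J (A u)⟫ := hJadj x (A u)
      have hy' : ⟪J y, A u⟫ = -⟪y, J (A u)⟫ := hJadj y (A u)
      rw [hx', hy'] at h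
      linear_combination h
    rcases rank_one_aux (A (J u)) (J (A u)) key with h | h
    · exact ⟨1, one_ne_zero, by rw [h, one_smul]⟩
    · exact ⟨-1, by norm_num, by rw [h, neg_one_smul]⟩
  -- the main pointwise computation
  have hstep8 : ∀ v : V, ‖v‖ = 1 → ∀ w : V, w ≠ 0 → ⟪w, v⟫ = 0 → ⟪w, J v⟫ = 0 →
      ⟪w, A v⟫ = 0 → ⟪w, J (A v)⟫ = 0 → ∃ r : ℝ, A w = r • J w := by
    intro v hv w hw0 o1 o2 o3 o4
    obtain ⟨sv, hsv0, hsv⟩ := hsig v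
    obtain ⟨sw, hsw0, hsw⟩ := hsig w
    have hvv : ⟪v, v⟫ = 1 := by rw [real_inner_self_eq_norm_sq, hv]; norm_num
    have zJvv : ⟪J v, v⟫ = 0 := by
      have h := hJadj v v
      have h2 : ⟪v, J v⟫ = ⟪J v, v⟫ := real_inner_comm (J v) v
      linarith
    have zJwJv : ⟪J w, J v⟫ = 0 := by rw [hJiso]; exact o1
    have zJwv : ⟪J w, v⟫ = 0 := by
      have := hJadj w v
      linarith [o2]
    have zJwAJv : ⟪J w, A (J v)⟫ = 0 := by
      rw [hsv, real_inner_smul_right, hJiso, o3]; ring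
    have zJwAv : ⟪J w, A v⟫ = 0 := by
      have := hJadj w (A v)
      linarith [o4]
    have zJvJw : ⟪J v, J w⟫ = 0 := by
      rw [hJiso, real_inner_comm]; exact o1
    have zvAw : ⟪v, A w⟫ = 0 := by
      have h := hAskew w v
      have h2 : ⟪v, A w⟫ = ⟪A w, v⟫ := real_inner_comm (A w) v
      linarith [o3]
    have zJvAJw : ⟪J v, A (J w)⟫ = 0 := by
      rw [hsw, real_inner_smul_right, hJiso, zvAw]; ring
    have zvAv : ⟪v, A v⟫ = 0 := hAdiag v
    have zvw : ⟪v, w⟫ = 0 := by rw [real_inner_comm]; exact o1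
    have main : ∀ y : V, c₀ * (⟪J v, A v⟫ * (sw * ⟪y, J (A w)⟫)) = -3 * ⟪w, y⟫ := by
      intro y
      have h1 : R (J w) (J v) v y = R w v v y := hkahler w v v y
      have h2 := hbianchi (J w) (J v) v y
      have h3 : R v (J w) (J v) y = - R (J w) v (J v) y := hskew v (J w) (J v) y
      have h4 := hK (J w) (J v) v y
      have h5 := hK (J v) (J w) v y
      have h6 : R (J v) (J w) v y = R v w v y := hkahler v w v y
      have h7 := hK v w v y
      have h8 : R v v w y = 0 := hzero1 v w y
      have h9 := hPall v w y
      rw [zJvv, zJwJv, zJwv, zJwAJv, zJwAv] at h4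
      rw [zJwv, zJvJw, zJvv, zJvAJw, hsw, real_inner_smul_right] at h5
      rw [o1, zvw, hvv, zvAw, zvAv] at h7
      rw [hvv, o1, o3] at h9
      have hcomm : ⟪y, w⟫ = ⟪w, y⟫ := real_inner_comm w y
      rw [hcomm] at h7
      linear_combination (-1 : ℝ) * h5 + h6 + h7 - h8 - 2 * h9 - 2 * h1 + h4 + h2 - h3
    have hvec : ∀ y : V,
        ⟪y, (c₀ * (⟪J v, A v⟫ * sw)) • (J (A w)) + (3:ℝ) • w⟫ = 0 := by
      intro y
      rw [inner_add_right, real_inner_smul_right, real_inner_smul_right]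
      have h := main y
      have hcomm : ⟪w, y⟫ = ⟪y, w⟫ := real_inner_comm y w
      linear_combination h - 3 * hcomm
    have hzero : (c₀ * (⟪J v, A v⟫ * sw)) • (J (A w)) + (3:ℝ) • w = 0 :=
      inner_self_eq_zero.mp (hvec _)
    have hκ : c₀ * (⟪J v, A v⟫ * sw) ≠ 0 := by
      intro h
      rw [h, zero_smul, zero_add] at hzero
      have h3 : (3:ℝ) ≠ 0 := by norm_num
      exact hw0 ((smul_eq_zero.mp hzero).resolve_left h3)
    have h1 : (c₀ * (⟪J v, A v⟫ * sw)) • (J (A w)) = (-3 : ℝ) • w := by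
      have := eq_neg_of_add_eq_zero_left hzero
      rw [this, neg_smul]
    have hJAw : J (A w) = ((c₀ * (⟪J v, A v⟫ * sw))⁻¹ * (-3)) • w := by
      calc J (A w)
          = (c₀ * (⟪J v, A v⟫ * sw))⁻¹ • ((c₀ * (⟪J v, A v⟫ * sw)) • J (A w)) := by
            rw [smul_smul, inv_mul_cancel₀ hκ, one_smul]
      _ = ((c₀ * (⟪J v, A v⟫ * sw))⁻¹ * (-3)) • w := by rw [h1, smul_smul]
    refine ⟨-((c₀ * (⟪J v, A v⟫ * sw))⁻¹ * (-3)), ?_⟩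
    have h2 : J (J (A w)) = -(A w) := hJ2 (A w)
    rw [hJAw, map_smul] at h2
    calc A w = -(-(A w)) := (neg_neg _).symm
    _ = -(((c₀ * (⟪J v, A v⟫ * sw))⁻¹ * (-3)) • J w) := by rw [h2]
    _ = (-((c₀ * (⟪J v, A v⟫ * sw))⁻¹ * (-3))) • J w := by rw [neg_smul]
  -- alignment of A with J
  have hAL : ∀ u : V, u ≠ 0 → ∃ r : ℝ, A u = r • J u := by
    intro u hu
    obtain ⟨su, hsu, hsigu⟩ := hsig u
    obtain ⟨v, hv1, hv2, hv3, hv4, hv5⟩ := hperp u (J u) (A u) (J (A u))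
    have hvne : v ≠ 0 := by
      intro h; rw [h, norm_zero] at hv1; norm_num at hv1
    -- translate orthogonality: u ⊥ v, J v, A v, J (A v)
    have o1 : ⟪u, v⟫ = 0 := hv2
    have o2 : ⟪u, J v⟫ = 0 := by
      have := hJadj u v
      linarith [hv3]
    have o3 : ⟪u, A v⟫ = 0 := by
      have := hAskew u v
      linarith [hv4]
    have o4 : ⟪u, J (A v)⟫ = 0 := by
      have e1 := hJadj u (A v)
      have e2 := hAskew (J u) v
      rw [hsigu, real_inner_smul_left, hv5] at e2
      linarith
    exact hstep8 v hv1 u hu o1 o2 o3 o4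
  -- conclusion
  have hJbij : Function.Bijective J :=
    ⟨hJinj, (LinearMap.injective_iff_surjective).mp hJinj⟩
  have hmapJ : ∀ τ : Submodule ℝ V, Module.finrank ℝ (Submodule.map J τ) = Module.finrank ℝ τ := by
    intro τ
    have := LinearEquiv.finrank_map_eq (LinearEquiv.ofBijective J hJbij) τ
    rwa [show ((LinearEquiv.ofBijective J hJbij : V →ₗ[ℝ] V)) = J from LinearMap.ext fun _ => rfl] at this
  have hmapA : ∀ τ : Submodule ℝ V, Module.finrank ℝ (Submodule.map A τ) = Module.finrank ℝ τ := by
    intro τ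
    have := LinearEquiv.finrank_map_eq (LinearEquiv.ofBijective A hAinv) τ
    rwa [show ((LinearEquiv.ofBijective A hAinv : V →ₗ[ℝ] V)) = A from LinearMap.ext fun _ => rfl] at this
  constructor
  · intro hJσ
    have hle : Submodule.map A σ ≤ σ := by
      rintro _ ⟨u, hu, rfl⟩
      by_cases h0 : u = 0
      · rw [h0, map_zero]; exact σ.zero_mem
      · obtain ⟨r, hr⟩ := hAL u h0
        rw [hr]
        have : J u ∈ Submodule.map J σ := ⟨u, hu, rfl⟩
        rw [hJσ] at this
        exact σ.smul_mem r this
    exact Submodule.eq_of_le_of_finrank_le hle (le_of_eq (hmapA σ).symm)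
  · intro hAσ
    have hle : Submodule.map J σ ≤ σ := by
      rintro _ ⟨u, hu, rfl⟩
      by_cases h0 : u = 0
      · rw [h0, map_zero]; exact σ.zero_mem
      · obtain ⟨r, hr⟩ := hAL u h0
        have hr0 : r ≠ 0 := by
          intro h
          rw [h, zero_smul] at hr
          exact h0 (hAinj (by rw [hr, map_zero]))
        have : J u = r⁻¹ • A u := by
          rw [hr, smul_smul, inv_mul_cancel₀ hr0, one_smul]
        rw [this]
        have : A u ∈ Submodule.map A σ := ⟨u, hu, rfl⟩
        rw [hAσ] at this
        exact σ.smul_mem r⁻¹ this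
    exact Submodule.eq_of_le_of_finrank_le hle (le_of_eq (hmapJ σ).symm)
end
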